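/- arXiv:2003.05769 — 6 statements merged into one kernel-verified Lean document; each statement's English description precedes it below -/
import Mathlib

section
/- Let μₙ, μ be probability measures on a Polish space X with μₙ → μ weakly, and let fₙ : X → ℝ be a uniformly bounded sequence of measurable functions (‖fₙ‖_∞ ≤ C for all n) that converges continuously to f, i.e., fₙ(xₙ) → f(x) whenever xₙ → x. Then ∫ fₙ dμₙ → ∫ f dμ. -/
open MeasureTheory Filter Topology

/-- Embed a "diagonal" family of points into a single sequence converging to `x`. -/
private lemma aux_seq {X : Type*} [MetricSpace X] (x : X) (n : ℕ → ℕ)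
    (hn : ∀ m, m ≤ n m) (y : ℕ → X) (hy : Tendsto y atTop (𝓝 x)) :
    ∃ z : ℕ → X, Tendsto z atTop (𝓝 x) ∧
      ∀ J, ∃ i, J ≤ i ∧ ∃ m, i = n m ∧ z i = y m := by
  classical
  let φ : ℕ → ℕ := fun j => Nat.rec 0 (fun _ p => n p + 1) j
  have hφ_succ : ∀ j, φ (j + 1) = n (φ j) + 1 := fun j => rfl
  have hφ_mono : StrictMono φ := strictMono_nat_of_lt_succ (fun j => by
    have h1 := hn (φ j); rw [hφ_succ j]; omega)
  have hφ_ge : ∀ j, j ≤ φ j := fun j => hφ_mono.le_apply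
  have hψ_mono : StrictMono (fun j => n (φ j)) := strictMono_nat_of_lt_succ (fun j => by
    show n (φ j) < n (φ (j + 1))
    have h1 := hn (φ (j + 1))
    rw [hφ_succ j] at h1 ⊢
    omega)
  set ψ : ℕ → ℕ := fun j => n (φ j) with hψdef
  have hψ_ge : ∀ j, j ≤ ψ j := fun j => le_trans (hφ_ge j) (hn (φ j))
  refine ⟨fun i => if h : ∃ j, ψ j = i then y (φ (Nat.find h)) else x, ?_, ?_⟩
  · rw [Metric.tendsto_atTop] at hy ⊢
    intro ε hε
    obtain ⟨M, hM⟩ := hy ε hε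
    refine ⟨ψ M, fun i hi => ?_⟩
    by_cases h : ∃ j, ψ j = i
    · rw [dif_pos h]
      have hfind := Nat.find_spec h
      have hjM : M ≤ Nat.find h := by
        by_contra hc
        push_neg at hc
        have := hψ_mono hc
        omega
      exact hM _ (hjM.trans (hφ_ge _))
    · rw [dif_neg h]
      simpa using hε
  · intro J
    have hex : ∃ j, ψ j = ψ J := ⟨J, rfl⟩
    refine ⟨ψ J, hψ_ge J, φ J, rfl, ?_⟩
    show (if h : ∃ j, ψ j = ψ J then y (φ (Nat.find h)) else x) = y (φ J)
    rw [dif_pos hex]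
    have : Nat.find hex = J := hψ_mono.injective (Nat.find_spec hex)
    rw [this]

/-- Continuous convergence gives a locally uniform lower bound. -/
private lemma aux_loc {X : Type*} [MetricSpace X] (f : ℕ → X → ℝ) (flim : X → ℝ)
    (hcont : ∀ (x : X) (xs : ℕ → X), Tendsto xs atTop (𝓝 x) →
      Tendsto (fun n => f n (xs n)) atTop (𝓝 (flim x)))
    (x : X) {ε : ℝ} (hε : 0 < ε) :
    ∃ δ > (0 : ℝ), ∃ N : ℕ, ∀ n ≥ N, ∀ y, dist y x < δ → flim x - ε < f n y := by
  by_contra hc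
  push_neg at hc
  have hc' : ∀ m : ℕ, ∃ nn, m ≤ nn ∧ ∃ y, dist y x < 1 / (m + 1) ∧ f nn y ≤ flim x - ε := by
    intro m
    obtain ⟨nn, hnn, y, h1, h2⟩ := hc (1 / (m + 1)) (by positivity) m
    exact ⟨nn, hnn, y, h1, h2⟩
  choose n hn y hy1 hy2 using hc'
  have hyx : Tendsto y atTop (𝓝 x) := by
    refine tendsto_iff_dist_tendsto_zero.2 ?_
    exact squeeze_zero (fun m => dist_nonneg) (fun m => (hy1 m).le)
      tendsto_one_div_add_atTop_nhds_zero_nat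
  obtain ⟨z, hz, hfreq⟩ := aux_seq x n hn y hyx
  have hev : ∀ᶠ i in atTop, flim x - ε < f i (z i) :=
    (hcont x z hz).eventually (eventually_gt_nhds (by linarith))
  obtain ⟨N, hN⟩ := eventually_atTop.1 hev
  obtain ⟨i, hiN, m, him, hzm⟩ := hfreq N
  have hlt := hN i hiN
  rw [hzm, him] at hlt
  exact absurd hlt (not_lt.2 (hy2 m))

/-- Integrability and bound on the integral for bounded measurable functions. -/
private lemma aux_int {X : Type*} [MeasurableSpace X] (ν : Measure X)
    [IsProbabilityMeasure ν] (g : X → ℝ) (hg : Measurable g) (C : ℝ)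
    (hb : ∀ x, |g x| ≤ C) : Integrable g ν ∧ |∫ x, g x ∂ν| ≤ C := by
  have h1 : Integrable g ν := (integrable_const C).mono' hg.aestronglyMeasurable
    (Eventually.of_forall fun x => by simpa [Real.norm_eq_abs] using hb x)
  refine ⟨h1, ?_⟩
  have h2 : ‖∫ x, g x ∂ν‖ ≤ ∫ _, C ∂ν :=
    norm_integral_le_of_norm_le (integrable_const C)
      (Eventually.of_forall fun x => by simpa [Real.norm_eq_abs] using hb x)
  simpa [Real.norm_eq_abs] using h2

/-- One-sided (liminf) version of the main theorem. -/
private lemma aux_liminf {X : Type*} [MetricSpace X]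
    [MeasurableSpace X] [BorelSpace X]
    (μ : ℕ → Measure X) (μlim : Measure X)
    [∀ n, IsProbabilityMeasure (μ n)] [IsProbabilityMeasure μlim]
    (hweak : ∀ g : X → ℝ, Continuous g → (∃ M, ∀ x, |g x| ≤ M) →
      Tendsto (fun n => ∫ x, g x ∂(μ n)) atTop (𝓝 (∫ x, g x ∂μlim)))
    (f : ℕ → X → ℝ) (flim : X → ℝ)
    (hmeas : ∀ n, Measurable (f n))
    (C : ℝ) (hbdd : ∀ n x, |f n x| ≤ C)
    (hcont : ∀ (x : X) (xs : ℕ → X), Tendsto xs atTop (𝓝 x) →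
      Tendsto (fun n => f n (xs n)) atTop (𝓝 (flim x))) :
    ∫ x, flim x ∂μlim ≤ atTop.liminf (fun n => ∫ x, f n x ∂(μ n)) := by
  classical
  haveI hne : Nonempty X := by
    rcases isEmpty_or_nonempty X with h | h
    · exfalso
      have h1 : μlim Set.univ = 1 := measure_univ
      rw [Set.univ_eq_empty_iff.2 h, measure_empty] at h1
      simp at h1
    · exact h
  obtain ⟨x₀⟩ := id hne
  have hC0 : 0 ≤ C := le_trans (abs_nonneg _) (hbdd 0 x₀)
  have hflim_lim : ∀ x, Tendsto (fun k => f k x) atTop (𝓝 (flim x)) :=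
    fun x => hcont x (fun _ => x) tendsto_const_nhds
  have hflim_bd : ∀ x, |flim x| ≤ C := by
    intro x
    refine abs_le.2 ⟨?_, ?_⟩
    · exact ge_of_tendsto (hflim_lim x)
        (Eventually.of_forall fun k => (abs_le.1 (hbdd k x)).1)
    · exact le_of_tendsto (hflim_lim x)
        (Eventually.of_forall fun k => (abs_le.1 (hbdd k x)).2)
  have hflim_meas : Measurable flim :=
    measurable_of_tendsto_metrizable hmeas (tendsto_pi_nhds.2 hflim_lim)
  -- the inf-convolution lower envelopes
  set F : ℕ → X → ℕ × X → ℝ :=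
    fun k x p => if k ≤ p.1 then f p.1 p.2 + k * dist x p.2 else C with hFdef
  set h : ℕ → X → ℝ := fun k x => ⨅ p, F k x p with hhdef
  have hrfl : ∀ k x, h k x = ⨅ p, F k x p := fun _ _ => rfl
  have hFlb : ∀ k x p, -C ≤ F k x p := by
    intro k x p
    rw [hFdef]
    dsimp only
    split
    · have h1 := (abs_le.1 (hbdd p.1 p.2)).1
      have h2 : (0 : ℝ) ≤ k * dist x p.2 :=
        mul_nonneg (Nat.cast_nonneg k) dist_nonneg
      linarith
    · linarith
  have hbdb : ∀ k x, BddBelow (Set.range (F k x)) := by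
    intro k x
    refine ⟨-C, ?_⟩
    rintro v ⟨p, rfl⟩
    exact hFlb k x p
  have h_le : ∀ k n x, k ≤ n → h k x ≤ f n x := by
    intro k n x hkn
    rw [hrfl k x]
    refine le_trans (ciInf_le (hbdb k x) (n, x)) ?_
    rw [hFdef]
    simp [hkn, dist_self]
  have h_lb : ∀ k x, -C ≤ h k x := fun k x => by
    rw [hrfl k x]; exact le_ciInf (hFlb k x)
  have h_ub : ∀ k x, h k x ≤ C := fun k x =>
    (h_le k k x le_rfl).trans (abs_le.1 (hbdd k x)).2
  have h_abs : ∀ k x, |h k x| ≤ C := fun k x => abs_le.2 ⟨h_lb k x, h_ub k x⟩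
  have key : ∀ k x x', h k x ≤ h k x' + k * dist x x' := by
    intro k x x'
    have h1 : ∀ p, h k x - k * dist x x' ≤ F k x' p := by
      intro p
      have h2 : h k x ≤ F k x p := by
        rw [hrfl k x]; exact ciInf_le (hbdb k x) p
      have h3 : F k x p ≤ F k x' p + k * dist x x' := by
        rw [hFdef]
        dsimp only
        split
        · have h4 : dist x p.2 ≤ dist x x' + dist x' p.2 := dist_triangle x x' p.2
          have h5 : (k : ℝ) * dist x p.2 ≤ k * (dist x x' + dist x' p.2) :=
            mul_le_mul_of_nonneg_left h4 (Nat.cast_nonneg k)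
          have h6 : (k : ℝ) * (dist x x' + dist x' p.2)
              = k * dist x' p.2 + k * dist x x' := by ring
          linarith
        · have h7 : (0 : ℝ) ≤ k * dist x x' :=
            mul_nonneg (Nat.cast_nonneg k) dist_nonneg
          linarith
      linarith
    have h8 := le_ciInf h1
    rw [← hrfl k x'] at h8
    linarith
  have h_cont : ∀ k, Continuous (h k) := by
    intro k
    have hlip : LipschitzWith (k : NNReal) (h k) := by
      refine LipschitzWith.of_dist_le_mul fun x x' => ?_
      rw [Real.dist_eq, abs_sub_le_iff]
      constructor
      · have := key k x x'
        push_cast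
        linarith
      · have := key k x' x
        rw [dist_comm x' x] at this
        push_cast
        linarith
    exact hlip.continuous
  -- pointwise convergence of the envelopes
  have h_tendsto : ∀ x, Tendsto (fun k => h k x) atTop (𝓝 (flim x)) := by
    intro x
    rw [Metric.tendsto_atTop]
    intro ε hε
    obtain ⟨δ, hδ, N₁, hN₁⟩ := aux_loc f flim hcont x (half_pos hε)
    have hev1 : ∀ᶠ k : ℕ in atTop, N₁ ≤ k := eventually_ge_atTop N₁
    have hev2 : ∀ᶠ k : ℕ in atTop, (2 * C) / δ < (k : ℝ) :=
      tendsto_natCast_atTop_atTop.eventually_gt_atTop ((2 * C) / δ)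
    have hev3 : ∀ᶠ k : ℕ in atTop, f k x < flim x + ε / 2 :=
      (hflim_lim x).eventually (eventually_lt_nhds (by linarith))
    obtain ⟨N, hN⟩ := eventually_atTop.1 ((hev1.and hev2).and hev3)
    refine ⟨N, fun k hk => ?_⟩
    obtain ⟨⟨hkN₁, hk2C⟩, hkup⟩ := hN k hk
    have hlow : flim x - ε / 2 ≤ h k x := by
      rw [hrfl k x]
      refine le_ciInf fun p => ?_
      rw [hFdef]
      dsimp only
      split
      · rename_i hkp
        rcases lt_or_ge (dist p.2 x) δ with hd | hd
        · have h1 := hN₁ p.1 (hkN₁.trans hkp) p.2 hd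
          have h2 : (0 : ℝ) ≤ k * dist x p.2 :=
            mul_nonneg (Nat.cast_nonneg k) dist_nonneg
          linarith
        · have h1 : (2 * C) < (k : ℝ) * δ := (div_lt_iff₀ hδ).1 hk2C
          have h2 : (k : ℝ) * δ ≤ k * dist x p.2 := by
            rw [dist_comm]
            exact mul_le_mul_of_nonneg_left hd (Nat.cast_nonneg k)
          have h3 := (abs_le.1 (hbdd p.1 p.2)).1
          have h4 := (abs_le.1 (hflim_bd x)).2
          linarith
      · have h4 := (abs_le.1 (hflim_bd x)).2
        linarith
    have hup : h k x < flim x + ε / 2 := lt_of_le_of_lt (h_le k k x le_rfl) hkup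
    rw [Real.dist_eq, abs_lt]
    constructor <;> linarith
  -- integral comparisons
  have hint_f : ∀ n m : ℕ, Integrable (f n) (μ m) :=
    fun n m => (aux_int (μ m) (f n) (hmeas n) C (hbdd n)).1
  have hint_h : ∀ k m : ℕ, Integrable (h k) (μ m) :=
    fun k m => (aux_int (μ m) (h k) (h_cont k).measurable C (h_abs k)).1
  have step1 : ∀ k, ∫ x, h k x ∂μlim ≤ atTop.liminf (fun n => ∫ x, f n x ∂(μ n)) := by
    intro k
    have hwk : Tendsto (fun n => ∫ x, h k x ∂(μ n)) atTop (𝓝 (∫ x, h k x ∂μlim)) :=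
      hweak (h k) (h_cont k) ⟨C, h_abs k⟩
    have heq : ∫ x, h k x ∂μlim = atTop.liminf (fun n => ∫ x, h k x ∂(μ n)) :=
      hwk.liminf_eq.symm
    rw [heq]
    refine liminf_le_liminf ?_ ?_ ?_
    · refine eventually_atTop.2 ⟨k, fun n hn => ?_⟩
      exact integral_mono (hint_h k n) (hint_f n n) (fun x => h_le k n x hn)
    · exact isBoundedUnder_of ⟨-C, fun n =>
        (abs_le.1 (aux_int (μ n) (h k) (h_cont k).measurable C (h_abs k)).2).1⟩
    · refine IsBoundedUnder.isCoboundedUnder_ge ?_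
      exact isBoundedUnder_of ⟨C, fun n =>
        (abs_le.1 (aux_int (μ n) (f n) (hmeas n) C (hbdd n)).2).2⟩
  have step2 : Tendsto (fun k => ∫ x, h k x ∂μlim) atTop (𝓝 (∫ x, flim x ∂μlim)) := by
    refine tendsto_integral_of_dominated_convergence (fun _ => C)
      (fun k => (h_cont k).measurable.aestronglyMeasurable) (integrable_const C)
      (fun k => Eventually.of_forall fun x => by
        simpa [Real.norm_eq_abs] using h_abs k x)
      (Eventually.of_forall h_tendsto)
  exact le_of_tendsto step2 (Eventually.of_forall step1)

/-- generalized dominated convergence under weak convergence of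
probability measures on a Polish space, with continuously convergent uniformly
bounded integrands. -/
theorem stmt_0
    {X : Type*} [MetricSpace X] [CompleteSpace X] [TopologicalSpace.SeparableSpace X]
    [MeasurableSpace X] [BorelSpace X]
    (μ : ℕ → Measure X) (μlim : Measure X)
    [∀ n, IsProbabilityMeasure (μ n)] [IsProbabilityMeasure μlim]
    (hweak : ∀ g : X → ℝ, Continuous g → (∃ M, ∀ x, |g x| ≤ M) →
      Tendsto (fun n => ∫ x, g x ∂(μ n)) atTop (𝓝 (∫ x, g x ∂μlim)))
    (f : ℕ → X → ℝ) (flim : X → ℝ)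
    (hmeas : ∀ n, Measurable (f n))
    (C : ℝ) (hbdd : ∀ n x, |f n x| ≤ C)
    (hcont : ∀ (x : X) (xs : ℕ → X), Tendsto xs atTop (𝓝 x) →
      Tendsto (fun n => f n (xs n)) atTop (𝓝 (flim x))) :
    Tendsto (fun n => ∫ x, f n x ∂(μ n)) atTop (𝓝 (∫ x, flim x ∂μlim)) := by
  have h1 : ∫ x, flim x ∂μlim ≤ atTop.liminf (fun n => ∫ x, f n x ∂(μ n)) :=
    aux_liminf μ μlim hweak f flim hmeas C hbdd hcont
  have h2 : ∫ x, -flim x ∂μlim ≤ atTop.liminf (fun n => ∫ x, -(f n x) ∂(μ n)) :=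
    aux_liminf μ μlim hweak (fun n x => -(f n x)) (fun x => -(flim x))
      (fun n => (hmeas n).neg) C (fun n x => by simpa using hbdd n x)
      (fun x xs hxs => (hcont x xs hxs).neg)
  have hbddle : IsBoundedUnder (· ≤ ·) atTop (fun n => ∫ x, f n x ∂(μ n)) :=
    isBoundedUnder_of ⟨C, fun n =>
      (abs_le.1 (aux_int (μ n) (f n) (hmeas n) C (hbdd n)).2).2⟩
  have hbddge : IsBoundedUnder (· ≥ ·) atTop (fun n => ∫ x, f n x ∂(μ n)) :=
    isBoundedUnder_of ⟨-C, fun n =>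
      (abs_le.1 (aux_int (μ n) (f n) (hmeas n) C (hbdd n)).2).1⟩
  have hneg : -(atTop.limsup (fun n => ∫ x, f n x ∂(μ n)))
      = atTop.liminf (fun n => -∫ x, f n x ∂(μ n)) := by
    exact Antitone.map_limsup_of_continuousAt (f := fun r : ℝ => -r)
      (fun a b hab => neg_le_neg hab) _ (continuous_neg.continuousAt)
      hbddle hbddge.isCoboundedUnder_le
  have h2' : -∫ x, flim x ∂μlim ≤ atTop.liminf (fun n => -∫ x, f n x ∂(μ n)) := by
    have e1 : ∫ x, -flim x ∂μlim = -∫ x, flim x ∂μlim := integral_neg flim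
    have e2 : (fun n => ∫ x, -(f n x) ∂(μ n)) = (fun n => -∫ x, f n x ∂(μ n)) := by
      funext n
      exact integral_neg (f n)
    rw [e1, e2] at h2
    exact h2
  have hsup : atTop.limsup (fun n => ∫ x, f n x ∂(μ n)) ≤ ∫ x, flim x ∂μlim := by
    rw [← hneg] at h2'
    linarith
  exact tendsto_of_le_liminf_of_limsup_le h1 hsup hbddle hbddge
end

section
/- Let μₙ, μ be probability measures on a measurable space X with μₙ → μ setwise (i.e., μₙ(A) → μ(A) for every measurable set A), and let fₙ : X → ℝ be a uniformly bounded sequence of measurable functions converging pointwise to f. Then ∫ fₙ dμₙ → ∫ f dμ. -/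
open MeasureTheory Filter Topology

private lemma integrable_of_bounded' {X : Type*} [MeasurableSpace X]
    (ν : Measure X) [IsProbabilityMeasure ν] {g : X → ℝ} (hg : Measurable g)
    {B : ℝ} (hB : ∀ x, |g x| ≤ B) : Integrable g ν := by
  refine Integrable.mono' (integrable_const B) hg.aestronglyMeasurable ?_
  exact ae_of_all _ fun x => by simpa using hB x

private lemma key_nonneg {X : Type*} [MeasurableSpace X]
    (μ : ℕ → Measure X) (μlim : Measure X)
    [∀ n, IsProbabilityMeasure (μ n)] [IsProbabilityMeasure μlim]
    (hsetwise : ∀ A : Set X, MeasurableSet A →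
      Tendsto (fun n => (μ n A).toReal) atTop (𝓝 ((μlim A).toReal)))
    {g : X → ℝ} (hg : Measurable g) {B : ℝ}
    (hg0 : ∀ x, 0 ≤ g x) (hgB : ∀ x, g x ≤ B) :
    Tendsto (fun n => ∫ x, g x ∂(μ n)) atTop (𝓝 (∫ x, g x ∂μlim)) := by
  have habs : ∀ x, |g x| ≤ B := fun x => by
    rw [abs_of_nonneg (hg0 x)]; exact hgB x
  have hint : ∀ ν : Measure X, IsProbabilityMeasure ν → Integrable g ν :=
    fun ν hν => integrable_of_bounded' ν hg habs
  have hrw : ∀ ν : Measure X, IsProbabilityMeasure ν →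
      ∫ x, g x ∂ν = ∫ t in Set.Ioi (0:ℝ), (ν {a | t < g a}).toReal := by
    intro ν hν
    exact (hint ν hν).integral_eq_integral_meas_lt (ae_of_all _ hg0)
  have h1 : ∀ n, ∫ x, g x ∂(μ n) = ∫ t in Set.Ioi (0:ℝ), ((μ n) {a | t < g a}).toReal :=
    fun n => hrw (μ n) inferInstance
  have h2 : ∫ x, g x ∂μlim = ∫ t in Set.Ioi (0:ℝ), (μlim {a | t < g a}).toReal :=
    hrw μlim inferInstance
  simp only [h1, h2]
  have hmeasF : ∀ ν : Measure X, Measurable fun t : ℝ => (ν {a | t < g a}).toReal := by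
    intro ν
    refine Measurable.ennreal_toReal ?_
    exact Antitone.measurable (fun s t hst => measure_mono (fun a h => lt_of_le_of_lt hst h))
  refine tendsto_integral_of_dominated_convergence
    (Set.indicator (Set.Ioc (0:ℝ) B) (fun _ => (1:ℝ)))
    (fun n => ((hmeasF (μ n)).aestronglyMeasurable)) ?_ ?_ ?_
  · refine (integrable_indicator_iff measurableSet_Ioc).2 ?_
    exact integrableOn_const (lt_of_le_of_lt (Measure.restrict_apply_le _ _)
      measure_Ioc_lt_top).ne
  · intro n
    filter_upwards [ae_restrict_mem measurableSet_Ioi] with t htpos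
    by_cases ht : t ∈ Set.Ioc (0:ℝ) B
    · rw [Set.indicator_of_mem ht]
      rw [Real.norm_eq_abs, abs_of_nonneg ENNReal.toReal_nonneg]
      calc ((μ n) {a | t < g a}).toReal ≤ ((μ n) Set.univ).toReal := by
            apply ENNReal.toReal_mono (measure_ne_top _ _)
            exact measure_mono (Set.subset_univ _)
        _ = 1 := by simp
    · rw [Set.indicator_of_notMem ht]
      have hB : B < t := by
        by_contra hc
        push_neg at hc
        exact ht ⟨htpos, hc⟩
      have h0 : {a | t < g a} = ∅ := by
        ext a; simp only [Set.mem_setOf_eq, Set.mem_empty_iff_false, iff_false, not_lt]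
        exact (hgB a).trans (le_of_lt hB)
      simp [h0]
  · refine ae_of_all _ fun t => ?_
    exact hsetwise {a | t < g a} (measurableSet_lt measurable_const hg)

private lemma key_bdd {X : Type*} [MeasurableSpace X]
    (μ : ℕ → Measure X) (μlim : Measure X)
    [∀ n, IsProbabilityMeasure (μ n)] [IsProbabilityMeasure μlim]
    (hsetwise : ∀ A : Set X, MeasurableSet A →
      Tendsto (fun n => (μ n A).toReal) atTop (𝓝 ((μlim A).toReal)))
    {g : X → ℝ} (hg : Measurable g) {B : ℝ}
    (habs : ∀ x, |g x| ≤ B) :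
    Tendsto (fun n => ∫ x, g x ∂(μ n)) atTop (𝓝 (∫ x, g x ∂μlim)) := by
  have h0 : ∀ x, 0 ≤ g x + B := fun x => by
    have := neg_abs_le (g x); linarith [habs x]
  have hB : ∀ x, g x + B ≤ B + B := fun x => by
    have := le_abs_self (g x); linarith [habs x]
  have h := key_nonneg μ μlim hsetwise (hg.add_const B) h0 hB
  have heq : ∀ (ν : Measure X), IsProbabilityMeasure ν →
      ∫ x, (g x + B) ∂ν = (∫ x, g x ∂ν) + B := by
    intro ν hν
    rw [integral_add (integrable_of_bounded' ν hg habs) (integrable_const B)]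
    simp
  simp only [heq (μ _) inferInstance, heq μlim inferInstance] at h
  have h' := h.sub_const B
  simpa using h'

/-- dominated convergence under setwise convergence of probability
measures, with pointwise convergent uniformly bounded measurable integrands. -/
theorem stmt_1
    {X : Type*} [MeasurableSpace X]
    (μ : ℕ → Measure X) (μlim : Measure X)
    [∀ n, IsProbabilityMeasure (μ n)] [IsProbabilityMeasure μlim]
    (hsetwise : ∀ A : Set X, MeasurableSet A →
      Tendsto (fun n => (μ n A).toReal) atTop (𝓝 ((μlim A).toReal)))
    (f : ℕ → X → ℝ) (flim : X → ℝ)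
    (hmeas : ∀ n, Measurable (f n))
    (C : ℝ) (hbdd : ∀ n x, |f n x| ≤ C)
    (hpt : ∀ x, Tendsto (fun n => f n x) atTop (𝓝 (flim x))) :
    Tendsto (fun n => ∫ x, f n x ∂(μ n)) atTop (𝓝 (∫ x, flim x ∂μlim)) := by
  have hmeaslim : Measurable flim :=
    measurable_of_tendsto_metrizable hmeas (tendsto_pi_nhds.2 hpt)
  have hlimbdd : ∀ x, |flim x| ≤ C := by
    intro x
    have : Tendsto (fun n => |f n x|) atTop (𝓝 |flim x|) := (hpt x).abs
    exact le_of_tendsto this (Eventually.of_forall fun n => hbdd n x)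
  -- distance functions
  set d : ℕ → X → ℝ := fun m x => |f m x - flim x| with hd
  have hdbdd : ∀ m x, d m x ≤ 2 * C := fun m x => by
    have := abs_sub (f m x) (flim x)
    calc d m x ≤ |f m x| + |flim x| := abs_sub _ _
      _ ≤ 2 * C := by linarith [hbdd m x, hlimbdd x]
  have hd0 : ∀ m x, 0 ≤ d m x := fun m x => abs_nonneg _
  -- tail sup in ℝ≥0∞
  set G : ℕ → X → ENNReal := fun k x => ⨆ m, ENNReal.ofReal (d (k + m) x) with hG
  have hGle : ∀ k x, G k x ≤ ENNReal.ofReal (2 * C) := fun k x =>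
    iSup_le fun m => ENNReal.ofReal_le_ofReal (hdbdd _ x)
  have hGne : ∀ k x, G k x ≠ ⊤ := fun k x =>
    ne_top_of_le_ne_top ENNReal.ofReal_ne_top (hGle k x)
  set g : ℕ → X → ℝ := fun k x => (G k x).toReal with hg
  have hgmeas : ∀ k, Measurable (g k) := by
    intro k
    apply Measurable.ennreal_toReal
    apply Measurable.iSup
    intro m
    exact ((hmeas (k + m)).sub hmeaslim).abs.ennreal_ofReal
  have hg0 : ∀ k x, 0 ≤ g k x := fun k x => ENNReal.toReal_nonneg
  have hgB : ∀ k x, g k x ≤ 2 * C := by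
    intro k x
    have h2C : 0 ≤ 2 * C := le_trans (hd0 0 x) (hdbdd 0 x)
    have := ENNReal.toReal_mono ENNReal.ofReal_ne_top (hGle k x)
    calc g k x ≤ (ENNReal.ofReal (2 * C)).toReal := this
      _ = 2 * C := ENNReal.toReal_ofReal h2C
  have hgabs : ∀ k x, |g k x| ≤ 2 * C := fun k x => by
    rw [abs_of_nonneg (hg0 k x)]; exact hgB k x
  -- d n x ≤ g k x for n ≥ k
  have hdg : ∀ k n, k ≤ n → ∀ x, d n x ≤ g k x := by
    intro k n hkn x
    have h1 : ENNReal.ofReal (d n x) ≤ G k x := by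
      have : n = k + (n - k) := by omega
      rw [this]
      exact le_iSup (fun m => ENNReal.ofReal (d (k + m) x)) (n - k)
    have h2 := ENNReal.toReal_mono (hGne k x) h1
    rwa [ENNReal.toReal_ofReal (hd0 n x)] at h2
  -- g k x → 0 as k → ∞, for each x
  have hgto0 : ∀ x, Tendsto (fun k => g k x) atTop (𝓝 0) := by
    intro x
    rw [Metric.tendsto_atTop]
    intro ε hε
    have hdx : Tendsto (fun m => d m x) atTop (𝓝 0) := by
      have := ((hpt x).sub_const (flim x)).abs
      simpa using this
    rw [Metric.tendsto_atTop] at hdx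
    obtain ⟨K, hK⟩ := hdx (ε / 2) (by linarith)
    refine ⟨K, fun k hk => ?_⟩
    have hGk : G k x ≤ ENNReal.ofReal (ε / 2) := by
      refine iSup_le fun m => ENNReal.ofReal_le_ofReal ?_
      have hm := hK (k + m) (le_trans hk (Nat.le_add_right k m))
      rw [Real.dist_eq, sub_zero] at hm
      exact le_of_lt ((le_abs_self _).trans_lt hm)
    have : g k x ≤ ε / 2 := by
      have h2 := ENNReal.toReal_mono ENNReal.ofReal_ne_top hGk
      calc g k x ≤ (ENNReal.ofReal (ε / 2)).toReal := h2
        _ = ε / 2 := ENNReal.toReal_ofReal (by linarith)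
    rw [Real.dist_eq, sub_zero, abs_of_nonneg (hg0 k x)]
    linarith
  -- ∫ g k dμlim → 0
  have hgint : Tendsto (fun k => ∫ x, g k x ∂μlim) atTop (𝓝 0) := by
    have := tendsto_integral_of_dominated_convergence (μ := μlim)
      (fun _ => (2 * C)) (fun k => (hgmeas k).aestronglyMeasurable)
      (integrable_const _)
      (fun k => ae_of_all _ fun x => by
        rw [Real.norm_eq_abs]; exact hgabs k x)
      (ae_of_all _ hgto0)
    simpa using this
  -- second piece: ∫ flim dμₙ → ∫ flim dμlim
  have hsecond : Tendsto (fun n => ∫ x, flim x ∂(μ n)) atTop (𝓝 (∫ x, flim x ∂μlim)) :=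
    key_bdd μ μlim hsetwise hmeaslim hlimbdd
  -- first piece: eₙ → 0
  have hfirst : Tendsto (fun n => (∫ x, f n x ∂(μ n)) - ∫ x, flim x ∂(μ n)) atTop (𝓝 0) := by
    rw [NormedAddCommGroup.tendsto_nhds_zero]
    intro ε hε
    obtain ⟨K, hK⟩ := (Metric.tendsto_atTop.1 hgint) (ε / 2) (by linarith)
    have hKd := hK K le_rfl
    rw [Real.dist_eq, sub_zero] at hKd
    have hKint : ∫ x, g K x ∂μlim < ε / 2 := lt_of_abs_lt hKd
    have htendK : Tendsto (fun n => ∫ x, g K x ∂(μ n)) atTop (𝓝 (∫ x, g K x ∂μlim)) :=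
      key_bdd μ μlim hsetwise (hgmeas K) (hgabs K)
    have hev : ∀ᶠ n in atTop, ∫ x, g K x ∂(μ n) < ε :=
      htendK.eventually_lt_const (by linarith)
    filter_upwards [hev, eventually_ge_atTop K] with n hn hnK
    have hintf : Integrable (f n) (μ n) := integrable_of_bounded' _ (hmeas n) (hbdd n)
    have hintl : Integrable flim (μ n) := integrable_of_bounded' _ hmeaslim hlimbdd
    rw [← integral_sub hintf hintl]
    calc ‖∫ x, (f n x - flim x) ∂(μ n)‖ ≤ ∫ x, ‖f n x - flim x‖ ∂(μ n) :=
          norm_integral_le_integral_norm _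
      _ ≤ ∫ x, g K x ∂(μ n) := by
          apply integral_mono (hintf.sub hintl).norm
            (integrable_of_bounded' _ (hgmeas K) (hgabs K))
          intro x
          simp only [Pi.sub_apply, Real.norm_eq_abs]
          exact hdg K n hnK x
      _ < ε := hn
  have := hfirst.add hsecond
  simpa using this
end

section
/- Let X = ℝ, let c(x) = min(|x|, 1), let x₀ = 0, and consider the deterministic dynamics x_{t+1} = x_t for the true model and x_{t+1} = x_t + 1/n for the n-th approximate model. Then the infinite-horizon average cost limsup_{N→∞} (1/N) Σ_{t=0}^{N-1} c(x_t) equals 0 for the true model and equals 1 for every approximate model n ≥ 1; in particular the average cost is not continuous even though the one-step kernels δ_{x+1/n} converge weakly to δ_x uniformly and continuously in x. -/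
open MeasureTheory Filter Topology Finset

/-- with cost c(x) = min(|x|,1), the true model (state stays at 0)
has average cost 0 while the n-th approximate model (state x_t = t/n) has
average cost 1 for every n ≥ 1; moreover the one-step dynamics converge
continuously (the states x + 1/n converge to x, uniformly and continuously in x),
so the average cost is not continuous under weak convergence of kernels. -/
theorem stmt_2 (c : ℝ → ℝ) (hc : ∀ x, c x = min |x| 1) :
    (Filter.atTop.limsup
        (fun N : ℕ => (1 / (N : ℝ)) * ∑ t ∈ Finset.range N, c 0) = 0) ∧
    (∀ n : ℕ, 1 ≤ n →
      Filter.atTop.limsup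
        (fun N : ℕ => (1 / (N : ℝ)) * ∑ t ∈ Finset.range N, c ((t : ℝ) / n)) = 1) ∧
    (∀ x : ℝ, ∀ xs : ℕ → ℝ, Tendsto xs atTop (𝓝 x) →
      ∀ g : ℝ → ℝ, Continuous g → (∃ M, ∀ y, |g y| ≤ M) →
        Tendsto (fun n : ℕ => ∫ y, g y ∂(Measure.dirac (xs n + 1 / ((n : ℝ) + 1))))
          atTop (𝓝 (∫ y, g y ∂(Measure.dirac x)))) := by
  refine ⟨?_, ?_, ?_⟩
  · have h0 : c 0 = 0 := by simp [hc]
    simp [h0, Filter.limsup_const]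
  · intro n hn
    have hn' : (0:ℝ) < n := by exact_mod_cast hn
    have htend : Tendsto (fun N : ℕ => (1 / (N : ℝ)) *
        ∑ t ∈ Finset.range N, c ((t : ℝ) / n)) atTop (𝓝 1) := by
      have hlow : Tendsto (fun N : ℕ => 1 - (n:ℝ)/N) atTop (𝓝 1) := by
        have h2 : Tendsto (fun N : ℕ => (n:ℝ)/N) atTop (𝓝 0) :=
          Tendsto.div_atTop tendsto_const_nhds (tendsto_natCast_atTop_atTop)
        simpa using (tendsto_const_nhds (x := (1:ℝ))).sub h2
      refine tendsto_of_tendsto_of_tendsto_of_le_of_le' hlow tendsto_const_nhds ?_ ?_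
      · filter_upwards [eventually_ge_atTop n] with N hN
        have hNpos : (0:ℝ) < N := lt_of_lt_of_le hn' (by exact_mod_cast hN)
        have hsum : (N:ℝ) - n ≤ ∑ t ∈ Finset.range N, c ((t:ℝ)/n) := by
          have hsub : Finset.Ico n N ⊆ Finset.range N := by
            intro t ht
            simp only [Finset.mem_range]
            exact (Finset.mem_Ico.mp ht).2
          have h1 : ∑ t ∈ Finset.Ico n N, c ((t:ℝ)/n) = (N:ℝ) - n := by
            have heq : ∀ t ∈ Finset.Ico n N, c ((t:ℝ)/n) = 1 := by
              intro t ht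
              have htn : (n:ℝ) ≤ t := by exact_mod_cast (Finset.mem_Ico.mp ht).1
              have h1t : (1:ℝ) ≤ (t:ℝ)/n := (one_le_div hn').mpr htn
              rw [hc, abs_of_nonneg (by positivity), min_eq_right h1t]
            rw [Finset.sum_congr rfl heq, Finset.sum_const, Nat.card_Ico]
            simp [Nat.cast_sub hN]
          calc (N:ℝ) - n = ∑ t ∈ Finset.Ico n N, c ((t:ℝ)/n) := h1.symm
            _ ≤ ∑ t ∈ Finset.range N, c ((t:ℝ)/n) := by
                refine Finset.sum_le_sum_of_subset_of_nonneg hsub ?_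
                intro t _ _
                rw [hc]; positivity
        have e1 : 1 - (n:ℝ)/N = ((N:ℝ) - n)/N := by field_simp
        have e2 : (1 / (N:ℝ)) * ∑ t ∈ Finset.range N, c ((t:ℝ)/n)
            = (∑ t ∈ Finset.range N, c ((t:ℝ)/n)) / N := by ring
        rw [e1, e2]
        gcongr
      · filter_upwards [eventually_ge_atTop n] with N hN
        have hNpos : (0:ℝ) < N := lt_of_lt_of_le hn' (by exact_mod_cast hN)
        have hsum : ∑ t ∈ Finset.range N, c ((t:ℝ)/n) ≤ N := by
          calc ∑ t ∈ Finset.range N, c ((t:ℝ)/n) ≤ ∑ t ∈ Finset.range N, (1:ℝ) := by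
                refine Finset.sum_le_sum ?_
                intro t _
                rw [hc]; exact min_le_right _ _
            _ = N := by simp
        rw [one_div, inv_mul_le_iff₀ hNpos]
        linarith
    exact htend.limsup_eq
  · rintro x xs hxs g hg ⟨M, hM⟩
    simp only [integral_dirac]
    have h2 : Tendsto (fun n : ℕ => xs n + 1 / ((n:ℝ) + 1)) atTop (𝓝 x) := by
      have : Tendsto (fun n : ℕ => 1 / ((n:ℝ) + 1)) atTop (𝓝 0) := tendsto_one_div_add_atTop_nhds_zero_nat
      simpa using hxs.add this
    exact ((hg.tendsto x).comp h2)
end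

section
/- Let X be a measurable space, U a set, c : X × U → ℝ bounded, and T(·|x,u) a family of probability measures on X. Suppose there is β < 1 such that ‖T(·|x,u) − T(·|x',u')‖_TV ≤ 2β for all (x,u), (x',u'). Then the Bellman-type operator (Tv)(x) = inf_u [c(x,u) + ∫ v(y) T(dy|x,u)] maps bounded functions to bounded functions and satisfies sp(Tv − Tw) ≤ β·sp(v − w) for all bounded measurable v, w, where sp(f) = sup f − inf f. -/
open MeasureTheory Filter Topology

/-- Total variation distance between two measures, as the supremum of
|∫ f dμ − ∫ f dν| over measurable f with ‖f‖_∞ ≤ 1. -/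
noncomputable def tvDist {X : Type*} [MeasurableSpace X] (μ ν : Measure X) : ℝ :=
  sSup {d | ∃ f : X → ℝ, Measurable f ∧ (∀ x, |f x| ≤ 1) ∧
    d = |(∫ x, f x ∂μ) - ∫ x, f x ∂ν|}

/-- Span seminorm of a real function: sup v − inf v (via sSup/sInf of range). -/
noncomputable def spanSemi {X : Type*} (v : X → ℝ) : ℝ :=
  sSup (Set.range v) - sInf (Set.range v)

/-- The Bellman-type operator (Tv)(x) = inf_u [c(x,u) + ∫ v dT(·|x,u)]. -/
noncomputable def bellman {X U : Type*} [MeasurableSpace X]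
    (c : X → U → ℝ) (T : X → U → Measure X) (v : X → ℝ) (x : X) : ℝ :=
  ⨅ u : U, (c x u + ∫ y, v y ∂(T x u))

lemma integrable_bdd {X : Type*} [MeasurableSpace X] (μ : Measure X) [IsFiniteMeasure μ]
    (f : X → ℝ) (hf : Measurable f) (C : ℝ) (hC : ∀ x, |f x| ≤ C) : Integrable f μ := by
  refine (integrable_const C).mono' hf.aestronglyMeasurable ?_
  filter_upwards with x
  simpa [Real.norm_eq_abs] using hC x

lemma abs_integral_bdd {X : Type*} [MeasurableSpace X] (μ : Measure X) [IsProbabilityMeasure μ]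
    (f : X → ℝ) (C : ℝ) (hC : ∀ x, |f x| ≤ C) : |∫ x, f x ∂μ| ≤ C := by
  have := norm_integral_le_of_norm_le_const (μ := μ) (f := f) (C := C)
    (by filter_upwards with x; simpa [Real.norm_eq_abs] using hC x)
  simpa [Real.norm_eq_abs] using this

lemma key_lemma {X : Type*} [MeasurableSpace X] [Nonempty X] (μ ν : Measure X)
    [IsProbabilityMeasure μ] [IsProbabilityMeasure ν]
    (f : X → ℝ) (hf : Measurable f) (C : ℝ) (hC : ∀ x, |f x| ≤ C)
    (β : ℝ) (hβ1 : β ≤ 1) (htv : tvDist μ ν ≤ 2 * β) :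
    (∫ x, f x ∂μ) - ∫ x, f x ∂ν ≤ β * spanSemi f := by
  have hba : BddAbove (Set.range f) := ⟨C, by rintro _ ⟨x, rfl⟩; exact (abs_le.mp (hC x)).2⟩
  have hbb : BddBelow (Set.range f) := ⟨-C, by rintro _ ⟨x, rfl⟩; exact (abs_le.mp (hC x)).1⟩
  set s := sSup (Set.range f) with hs
  set i := sInf (Set.range f) with hi
  have hle : ∀ x, i ≤ f x ∧ f x ≤ s := fun x =>
    ⟨csInf_le hbb ⟨x, rfl⟩, le_csSup hba ⟨x, rfl⟩⟩
  have hsp0 : 0 ≤ s - i := by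
    obtain ⟨x⟩ := ‹Nonempty X›
    linarith [(hle x).1, (hle x).2]
  set m := (s + i) / 2 with hm
  have hg : ∀ x, |f x - m| ≤ (s - i) / 2 := by
    intro x
    rw [abs_le]
    constructor <;> [linarith [(hle x).1]; linarith [(hle x).2]]
  have htvbdd : BddAbove {d | ∃ g : X → ℝ, Measurable g ∧ (∀ x, |g x| ≤ 1) ∧
      d = |(∫ x, g x ∂μ) - ∫ x, g x ∂ν|} := by
    refine ⟨2, ?_⟩
    rintro _ ⟨g, hgm, hgb, rfl⟩
    have h1 := abs_integral_bdd μ g 1 hgb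
    have h2 := abs_integral_bdd ν g 1 hgb
    calc |(∫ x, g x ∂μ) - ∫ x, g x ∂ν| ≤ |∫ x, g x ∂μ| + |∫ x, g x ∂ν| := abs_sub _ _
    _ ≤ 2 := by linarith
  have hint : ∀ (ρ : Measure X) [IsProbabilityMeasure ρ], Integrable f ρ := by
    intro ρ _; exact integrable_bdd ρ f hf C hC
  have hgint : ∀ (ρ : Measure X) [IsProbabilityMeasure ρ],
      (∫ x, f x - m ∂ρ) = (∫ x, f x ∂ρ) - m := by
    intro ρ _
    rw [integral_sub (hint ρ) (integrable_const m), integral_const]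
    simp
  have main : ∀ ε > 0, (∫ x, f x ∂μ) - ∫ x, f x ∂ν ≤ β * (s - i) + ε := by
    intro ε hε
    set r := ((s - i) + ε) / 2 with hr
    have hrpos : 0 < r := by positivity
    set h : X → ℝ := fun x => (f x - m) / r with hh
    have hhm : Measurable h := (hf.sub measurable_const).div_const r
    have hhb : ∀ x, |h x| ≤ 1 := by
      intro x
      rw [hh]
      simp only
      rw [abs_div, abs_of_pos hrpos, div_le_one hrpos]
      calc |f x - m| ≤ (s - i) / 2 := hg x
      _ ≤ r := by rw [hr]; linarith
    have hmem : |(∫ x, h x ∂μ) - ∫ x, h x ∂ν| ≤ tvDist μ ν :=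
      le_csSup htvbdd ⟨h, hhm, hhb, rfl⟩
    have hcalc : ∀ (ρ : Measure X) [IsProbabilityMeasure ρ],
        (∫ x, h x ∂ρ) = ((∫ x, f x ∂ρ) - m) / r := by
      intro ρ _
      rw [hh]
      rw [integral_div, hgint ρ]
    rw [hcalc μ, hcalc ν] at hmem
    rw [div_sub_div_same] at hmem
    have habs : |((∫ x, f x ∂μ) - m) - ((∫ x, f x ∂ν) - m)| / r ≤ 2 * β := by
      rw [abs_div, abs_of_pos hrpos] at hmem
      exact le_trans hmem htv
    have hβ0' : 0 ≤ β := by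
      have h0 : (0 : ℝ) ≤ |((∫ x, f x ∂μ) - m) - ((∫ x, f x ∂ν) - m)| / r := by positivity
      linarith
    have habs2 : |(∫ x, f x ∂μ) - (∫ x, f x ∂ν)| ≤ 2 * β * r := by
      have := (div_le_iff₀ hrpos).mp habs
      rwa [sub_sub_sub_cancel_right] at this
    calc (∫ x, f x ∂μ) - ∫ x, f x ∂ν ≤ |(∫ x, f x ∂μ) - (∫ x, f x ∂ν)| := le_abs_self _
    _ ≤ 2 * β * r := habs2
    _ = β * (s - i) + β * ε := by rw [hr]; ring
    _ ≤ β * (s - i) + ε := by nlinarith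
  have := le_of_forall_pos_le_add main
  simpa [spanSemi, ← hs, ← hi] using this

/-- under the uniform TV bound ‖T(·|x,u) − T(·|x',u')‖_TV ≤ 2β
with β < 1, the Bellman operator maps bounded functions to bounded functions
and is a span-contraction with modulus β. -/
theorem stmt_12
    {X U : Type*} [MeasurableSpace X] [Nonempty X] [Nonempty U]
    (c : X → U → ℝ) (Mc : ℝ) (hc : ∀ x u, |c x u| ≤ Mc)
    (T : X → U → Measure X) (hTprob : ∀ x u, IsProbabilityMeasure (T x u))
    (β : ℝ) (hβ0 : 0 ≤ β) (hβ1 : β < 1)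
    (hTV : ∀ x u x' u', tvDist (T x u) (T x' u') ≤ 2 * β) :
    (∀ v : X → ℝ, Measurable v → (∃ C, ∀ x, |v x| ≤ C) →
      ∃ K, ∀ x, |bellman c T v x| ≤ K) ∧
    (∀ v w : X → ℝ, Measurable v → Measurable w →
      (∃ C, ∀ x, |v x| ≤ C) → (∃ C, ∀ x, |w x| ≤ C) →
      spanSemi (fun x => bellman c T v x - bellman c T w x) ≤
        β * spanSemi (fun x => v x - w x)) := by
  -- key boundedness facts
  have habsint : ∀ (v : X → ℝ) (C : ℝ), (∀ x, |v x| ≤ C) →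
      ∀ x u, |∫ y, v y ∂(T x u)| ≤ C := by
    intro v C hC x u
    haveI := hTprob x u
    exact abs_integral_bdd (T x u) v C hC
  have hbdd : ∀ (v : X → ℝ) (C : ℝ), (∀ x, |v x| ≤ C) →
      ∀ x, BddBelow (Set.range fun u : U => c x u + ∫ y, v y ∂(T x u)) := by
    intro v C hC x
    refine ⟨-(Mc + C), ?_⟩
    rintro _ ⟨u, rfl⟩
    have h1 := (abs_le.mp (hc x u)).1
    have h2 := (abs_le.mp (habsint v C hC x u)).1
    simp only
    linarith
  have hKbound : ∀ (v : X → ℝ) (C : ℝ), (∀ x, |v x| ≤ C) →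
      ∀ x, |bellman c T v x| ≤ Mc + C := by
    intro v C hC x
    rw [abs_le]
    constructor
    · apply le_ciInf
      intro u
      have h1 := (abs_le.mp (hc x u)).1
      have h2 := (abs_le.mp (habsint v C hC x u)).1
      linarith
    · obtain ⟨u⟩ := ‹Nonempty U›
      refine le_trans (ciInf_le (hbdd v C hC x) u) ?_
      have h1 := (abs_le.mp (hc x u)).2
      have h2 := (abs_le.mp (habsint v C hC x u)).2
      linarith
  constructor
  · rintro v _ ⟨C, hC⟩
    exact ⟨Mc + C, hKbound v C hC⟩
  · rintro v w hv hw ⟨Cv, hCv⟩ ⟨Cw, hCw⟩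
    obtain ⟨d, hd⟩ : ∃ d : X → ℝ, d = fun x => v x - w x := ⟨_, rfl⟩
    have hdm : Measurable d := hd ▸ hv.sub hw
    have hdb : ∀ x, |d x| ≤ Cv + Cw := by
      intro x
      rw [hd]
      calc |v x - w x| ≤ |v x| + |w x| := abs_sub _ _
      _ ≤ Cv + Cw := add_le_add (hCv x) (hCw x)
    obtain ⟨F, hF⟩ : ∃ F : X → ℝ, F = fun x => bellman c T v x - bellman c T w x := ⟨_, rfl⟩
    rw [← hd, ← hF]
    -- main claim
    have claim : ∀ x x', F x - F x' ≤ β * spanSemi d := by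
      intro x x'
      refine le_of_forall_pos_le_add ?_
      intro ε hε
      -- pick u near-optimal for w at x
      obtain ⟨u, hu⟩ : ∃ u, c x u + ∫ y, w y ∂(T x u) < bellman c T w x + ε / 2 := by
        apply exists_lt_of_ciInf_lt
        rw [bellman]
        linarith
      -- pick u'' near-optimal for v at x'
      obtain ⟨u'', hu''⟩ : ∃ u'', c x' u'' + ∫ y, v y ∂(T x' u'') < bellman c T v x' + ε / 2 := by
        apply exists_lt_of_ciInf_lt
        rw [bellman]
        linarith
      have h1 : bellman c T v x ≤ c x u + ∫ y, v y ∂(T x u) :=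
        ciInf_le (hbdd v Cv hCv x) u
      have h2 : bellman c T w x' ≤ c x' u'' + ∫ y, w y ∂(T x' u'') :=
        ciInf_le (hbdd w Cw hCw x') u''
      haveI := hTprob x u
      haveI := hTprob x' u''
      have hiv : ∀ (x₀ : X) (u₀ : U), (∫ y, d y ∂(T x₀ u₀))
          = (∫ y, v y ∂(T x₀ u₀)) - ∫ y, w y ∂(T x₀ u₀) := by
        intro x₀ u₀
        haveI := hTprob x₀ u₀
        rw [hd]
        exact integral_sub (integrable_bdd _ v hv Cv hCv) (integrable_bdd _ w hw Cw hCw)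
      have hkey : (∫ y, d y ∂(T x u)) - ∫ y, d y ∂(T x' u'') ≤ β * spanSemi d :=
        key_lemma (T x u) (T x' u'') d hdm (Cv + Cw) hdb β hβ1.le (hTV x u x' u'')
      have e1 : F x ≤ (∫ y, d y ∂(T x u)) + ε / 2 := by
        simp only [hF]
        rw [hiv x u]
        linarith
      have e2 : (∫ y, d y ∂(T x' u'')) - ε / 2 ≤ F x' := by
        simp only [hF]
        rw [hiv x' u'']
        linarith
      have e3 : F x - F x' ≤ ((∫ y, d y ∂(T x u)) - ∫ y, d y ∂(T x' u'')) + ε := by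
        linarith
      calc F x - F x' ≤ ((∫ y, d y ∂(T x u)) - ∫ y, d y ∂(T x' u'')) + ε := e3
      _ ≤ β * spanSemi d + ε := by linarith [hkey]
    -- now conclude about the span of F
    have hFrange_ba : BddAbove (Set.range F) := by
      refine ⟨(Mc + Cv) + (Mc + Cw), ?_⟩
      rintro _ ⟨x, rfl⟩
      have h1 := (abs_le.mp (hKbound v Cv hCv x)).2
      have h2 := (abs_le.mp (hKbound w Cw hCw x)).1
      simp only [hF]
      linarith
    have hFrange_bb : BddBelow (Set.range F) := by
      refine ⟨-((Mc + Cv) + (Mc + Cw)), ?_⟩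
      rintro _ ⟨x, rfl⟩
      have h1 := (abs_le.mp (hKbound v Cv hCv x)).1
      have h2 := (abs_le.mp (hKbound w Cw hCw x)).2
      simp only [hF]
      linarith
    rw [spanSemi, sub_le_iff_le_add]
    apply csSup_le (Set.range_nonempty F)
    rintro _ ⟨x, rfl⟩
    rw [← sub_le_iff_le_add']
    apply le_csInf (Set.range_nonempty F)
    rintro _ ⟨x', rfl⟩
    have := claim x x'
    linarith
end

section
/- Suppose there exists a positive integer t and a measure μ on X with μ(X) < 2 such that Tᵗ(·|x,γ) ≤ μ(·) for all x and all stationary policies γ. Then there exists β < 1 with ‖Tᵗ(·|x,γ) − Tᵗ(·|x',γ)‖_TV ≤ 2β for all x, x', γ. -/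
open MeasureTheory Filter Topology

/-- t-step transition measures of a Markov kernel P, started at x. -/
noncomputable def iterK {X : Type*} [MeasurableSpace X]
    (P : X → Measure X) : ℕ → X → Measure X
  | 0, x => Measure.dirac x
  | (t + 1), x => (iterK P t x).bind P

private lemma integral_diff_le {X : Type*} [MeasurableSpace X]
    (μ P Q : Measure X) [IsFiniteMeasure μ] (hP : P ≤ μ) (hQ : Q ≤ μ)
    (f : X → ℝ) (hf : Measurable f) (hb : ∀ x, |f x| ≤ 1) :
    (∫ x, f x ∂P) - ∫ x, f x ∂Q ≤ (μ Set.univ).toReal := by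
  haveI : IsFiniteMeasure P := ⟨lt_of_le_of_lt (hP Set.univ) (measure_lt_top μ _)⟩
  haveI : IsFiniteMeasure Q := ⟨lt_of_le_of_lt (hQ Set.univ) (measure_lt_top μ _)⟩
  set g : X → ℝ := fun x => max (f x) 0 with hg
  set h : X → ℝ := fun x => max (-f x) 0 with hh
  have hgm : Measurable g := hf.max measurable_const
  have hhm : Measurable h := hf.neg.max measurable_const
  have hg0 : ∀ x, 0 ≤ g x := fun x => le_max_right _ _
  have hh0 : ∀ x, 0 ≤ h x := fun x => le_max_right _ _
  have hgb : ∀ x, g x ≤ 1 := fun x =>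
    max_le (le_trans (le_abs_self _) (hb x)) zero_le_one
  have hhb : ∀ x, h x ≤ 1 := fun x =>
    max_le (le_trans (le_abs_self _) (by rw [abs_neg]; exact hb x)) zero_le_one
  have hint : ∀ (ν : Measure X) [IsFiniteMeasure ν] (k : X → ℝ), Measurable k →
      (∀ x, |k x| ≤ 1) → Integrable k ν := by
    intro ν _ k hk hkb
    exact (integrable_const (1 : ℝ)).mono' hk.aestronglyMeasurable
      (Filter.Eventually.of_forall fun x => by simpa using hkb x)
  have habs : ∀ x, |g x| ≤ 1 := fun x => abs_le.2 ⟨le_trans (by norm_num) (hg0 x), hgb x⟩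
  have habh : ∀ x, |h x| ≤ 1 := fun x => abs_le.2 ⟨le_trans (by norm_num) (hh0 x), hhb x⟩
  have hfgh : ∀ x, f x = g x - h x := fun x => by
    simp only [hg, hh]
    rcases le_total (f x) 0 with hx | hx
    · rw [max_eq_right hx, max_eq_left (by linarith : (0:ℝ) ≤ -f x)]; ring
    · rw [max_eq_left hx, max_eq_right (by linarith : -f x ≤ (0:ℝ))]; ring
  have hintP : Integrable f P := hint P f hf hb
  have hintQ : Integrable f Q := hint Q f hf hb
  have hfP : ∫ x, f x ∂P = (∫ x, g x ∂P) - ∫ x, h x ∂P := by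
    rw [← integral_sub (hint P g hgm habs) (hint P h hhm habh)]
    exact integral_congr_ae (Filter.Eventually.of_forall hfgh)
  have hfQ : ∫ x, f x ∂Q = (∫ x, g x ∂Q) - ∫ x, h x ∂Q := by
    rw [← integral_sub (hint Q g hgm habs) (hint Q h hhm habh)]
    exact integral_congr_ae (Filter.Eventually.of_forall hfgh)
  have h1 : ∫ x, g x ∂P ≤ ∫ x, g x ∂μ :=
    integral_mono_measure hP (Filter.Eventually.of_forall hg0) (hint μ g hgm habs)
  have h2 : ∫ x, h x ∂Q ≤ ∫ x, h x ∂μ :=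
    integral_mono_measure hQ (Filter.Eventually.of_forall hh0) (hint μ h hhm habh)
  have h3 : (0:ℝ) ≤ ∫ x, h x ∂P := integral_nonneg hh0
  have h4 : (0:ℝ) ≤ ∫ x, g x ∂Q := integral_nonneg hg0
  have h5 : (∫ x, g x ∂μ) + ∫ x, h x ∂μ ≤ (μ Set.univ).toReal := by
    rw [← integral_add (hint μ g hgm habs) (hint μ h hhm habh)]
    calc ∫ x, g x + h x ∂μ ≤ ∫ _x, (1:ℝ) ∂μ := by
          apply integral_mono ((hint μ g hgm habs).add (hint μ h hhm habh))
            (integrable_const 1)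
          intro x
          have hbx := abs_le.1 (hb x)
          simp only [hg, hh, Pi.add_apply]
          rcases le_total (f x) 0 with hx | hx
          · rw [max_eq_right hx, max_eq_left (by linarith : (0:ℝ) ≤ -f x)]
            linarith [hbx.1]
          · rw [max_eq_left hx, max_eq_right (by linarith : -f x ≤ (0:ℝ))]
            linarith [hbx.2]
      _ = (μ Set.univ).toReal := by simp; rfl
  linarith [hfP, hfQ, h1, h2, h3, h4, h5]

/-- if there is a measure μ with μ(X) < 2 dominating all t-step
transition probabilities Tᵗ(·|x,γ), then there exists β < 1 with
‖Tᵗ(·|x,γ) − Tᵗ(·|x',γ)‖_TV ≤ 2β for all x, x', γ. -/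
theorem stmt_14
    {X U : Type*} [MeasurableSpace X]
    (T : X → U → Measure X) (hTprob : ∀ x u, IsProbabilityMeasure (T x u))
    (t : ℕ) (ht : 0 < t) (μ : Measure X) (hμfin : μ Set.univ < 2)
    (hdom : ∀ (γ : X → U) (x : X) (B : Set X), MeasurableSet B →
      iterK (fun y => T y (γ y)) t x B ≤ μ B) :
    ∃ β : ℝ, β < 1 ∧ ∀ (γ : X → U) (x x' : X),
      tvDist (iterK (fun y => T y (γ y)) t x) (iterK (fun y => T y (γ y)) t x')
        ≤ 2 * β := by
  haveI : IsFiniteMeasure μ := ⟨lt_trans hμfin (by norm_num)⟩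
  have hμlt : (μ Set.univ).toReal < 2 := by
    rw [show (2:ℝ) = (2:ENNReal).toReal by simp]
    exact ENNReal.toReal_strict_mono (by norm_num) hμfin
  refine ⟨(μ Set.univ).toReal / 2, by linarith, ?_⟩
  intro γ x x'
  have hle : ∀ y : X, iterK (fun z => T z (γ z)) t y ≤ μ := by
    intro y
    exact Measure.le_iff.2 fun s hs => hdom γ y s hs
  apply Real.sSup_le
  · rintro d ⟨f, hf, hb, rfl⟩
    rw [abs_sub_le_iff]
    constructor
    · have := integral_diff_le μ _ _ (hle x) (hle x') f hf hb
      linarith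
    · have := integral_diff_le μ _ _ (hle x') (hle x) f hf hb
      linarith
  · positivity
end

section
/- Let P be a Markov kernel on X and suppose for two stationary cost evaluations: π is the unique invariant probability measure of P, {πₙ} are invariant probability measures of kernels Pₙ, the family {πₙ} is tight, Pₙ(·|xₙ) → P(·|x) weakly for every sequence xₙ → x, and P(·|x) is weakly continuous in x. Then πₙ → π weakly. -/
open MeasureTheory Filter Topology
open scoped ENNReal NNReal BoundedContinuousFunction

set_option linter.unusedSectionVars false
set_option linter.unusedVariables false
set_option linter.unnecessarySimpa false
set_option maxHeartbeats 1000000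



section AuxGeneral

/-- From a sequence tending to infinity, extract a subsequence along which it is
strictly monotone. -/
private lemma aux_exists_strictMono_comp (ns : ℕ → ℕ) (h : Tendsto ns atTop atTop) :
    ∃ φ : ℕ → ℕ, StrictMono φ ∧ StrictMono (ns ∘ φ) := by
  have key : ∀ N M : ℕ, ∃ n, N ≤ n ∧ M < ns n := by
    intro N M
    rcases ((h.eventually (eventually_gt_atTop M)).and (eventually_ge_atTop N)).exists with
      ⟨n, h1, h2⟩
    exact ⟨n, h2, h1⟩
  choose pick hpick1 hpick2 using key
  let φ : ℕ → ℕ := fun k => Nat.rec (pick 0 0) (fun _ prev => pick (prev + 1) (ns prev)) k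
  have hφ : ∀ k, φ (k + 1) = pick (φ k + 1) (ns (φ k)) := fun k => rfl
  have h1 : StrictMono φ := by
    apply strictMono_nat_of_lt_succ
    intro k
    have := hpick1 (φ k + 1) (ns (φ k))
    rw [hφ k] at *
    omega
  have h2 : StrictMono (ns ∘ φ) := by
    apply strictMono_nat_of_lt_succ
    intro k
    have := hpick2 (φ k + 1) (ns (φ k))
    simpa [hφ k] using this
  exact ⟨φ, h1, h2⟩

variable {X : Type*} [MetricSpace X]

/-- Continuous convergence passes to strictly monotone subsequences. -/
private lemma aux_cc_subseq {E : Type*} [TopologicalSpace E] {T : ℕ → X → E} {c : X → E}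
    (hcc : ∀ (x : X) (xs : ℕ → X), Tendsto xs atTop (𝓝 x) →
      Tendsto (fun n => T n (xs n)) atTop (𝓝 (c x)))
    {h : ℕ → ℕ} (hh : StrictMono h) {x : X} {y : ℕ → X} (hy : Tendsto y atTop (𝓝 x)) :
    Tendsto (fun k => T (h k) (y k)) atTop (𝓝 (c x)) := by
  classical
  set xs : ℕ → X := fun n => if hn : ∃ k, h k = n then y hn.choose else x with hxs
  have hxs_h : ∀ k, xs (h k) = y k := by
    intro k
    have hex : ∃ k', h k' = h k := ⟨k, rfl⟩
    have : h hex.choose = h k := hex.choose_spec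
    simp only [hxs, dif_pos hex]
    rw [hh.injective this]
  have hxs_tendsto : Tendsto xs atTop (𝓝 x) := by
    intro V hV
    rw [mem_map, mem_atTop_sets]
    have : ∀ᶠ k in atTop, y k ∈ V := hy hV
    rcases eventually_atTop.mp this with ⟨N, hN⟩
    refine ⟨h N, fun n hn => ?_⟩
    by_cases hex : ∃ k, h k = n
    · have h1 : h hex.choose = n := hex.choose_spec
      have : N ≤ hex.choose := by
        by_contra hc
        push_neg at hc
        have := hh.lt_iff_lt.mpr hc
        omega
      simpa [hxs, dif_pos hex] using hN _ this
    · simpa [hxs, dif_neg hex] using mem_of_mem_nhds hV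
  have := (hcc x xs hxs_tendsto).comp hh.tendsto_atTop
  refine this.congr fun k => ?_
  simp [Function.comp, hxs_h k]

private lemma aux_integrable {mX : MeasurableSpace X} (μ : Measure X) [IsFiniteMeasure μ]
    {F : X → ℝ} (hF : AEStronglyMeasurable F μ) {M : ℝ} (hb : ∀ x, |F x| ≤ M) :
    Integrable F μ :=
  (integrable_const M).mono' hF (ae_of_all _ fun x => by
    simpa [Real.norm_eq_abs] using hb x)

/-- Package a bounded continuous real function. -/
private noncomputable def mkBCF (g : X → ℝ) (hg : Continuous g) (M : ℝ) (hb : ∀ x, |g x| ≤ M) :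
    X →ᵇ ℝ :=
  ⟨⟨g, hg⟩, ⟨2 * M, fun x y => by
    have := abs_sub (g x) (g y)
    have h1 := hb x
    have h2 := hb y
    rw [Real.dist_eq]
    calc |g x - g y| ≤ |g x| + |g y| := abs_sub _ _
    _ ≤ 2 * M := by linarith⟩⟩

@[simp] private lemma mkBCF_apply (g : X → ℝ) (hg : Continuous g) (M : ℝ) (hb : ∀ x, |g x| ≤ M)
    (x : X) : mkBCF g hg M hb x = g x := rfl

/-- Continuous convergence implies uniform convergence on compacts (eventual form). -/
private lemma aux_unif_on_compact {F : ℕ → X → ℝ} {f : X → ℝ} (hf : Continuous f)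
    (hcc : ∀ (x : X) (xs : ℕ → X), Tendsto xs atTop (𝓝 x) →
      Tendsto (fun n => F n (xs n)) atTop (𝓝 (f x)))
    {K : Set X} (hK : IsCompact K) {ε : ℝ} (hε : 0 < ε) :
    ∀ᶠ k in atTop, ∀ x ∈ K, |F k x - f x| ≤ ε := by
  by_contra hcon
  rw [not_eventually] at hcon
  have hcon' : ∃ᶠ k in atTop, ∃ x ∈ K, ε < |F k x - f x| := by
    refine hcon.mono fun k hk => ?_
    push_neg at hk
    exact hk
  obtain ⟨ψ, hψ, hP⟩ := extraction_of_frequently_atTop hcon'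
  choose xx hxxK hxxgt using hP
  obtain ⟨x₀, hx₀K, j, hj, hconv⟩ := hK.tendsto_subseq hxxK
  have h1 : Tendsto (fun l => F (ψ (j l)) (xx (j l))) atTop (𝓝 (f x₀)) :=
    aux_cc_subseq hcc (hψ.comp hj) hconv
  have h2 : Tendsto (fun l => f (xx (j l))) atTop (𝓝 (f x₀)) :=
    (hf.continuousAt.tendsto).comp hconv
  have h3 : Tendsto (fun l => |F (ψ (j l)) (xx (j l)) - f (xx (j l))|) atTop (𝓝 0) := by
    have := (h1.sub h2).abs
    simpa using this
  have h4 : ∀ᶠ l in atTop, |F (ψ (j l)) (xx (j l)) - f (xx (j l))| < ε :=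
    h3.eventually_lt_const hε
  rcases h4.exists with ⟨l, hl⟩
  exact absurd (hxxgt (j l)) (not_lt.mpr hl.le)

end AuxGeneral


section Aux2
variable {X : Type*} [MetricSpace X] [MeasurableSpace X] [BorelSpace X]

/-- Generalized dominated convergence: integrals of continuously-converging uniformly bounded
integrands against weakly converging tight measures converge. -/
private lemma aux_tendsto_integral_cc
    (ν : ℕ → Measure X) (hν : ∀ k, IsProbabilityMeasure (ν k))
    (ρ : Measure X) (hρ : IsProbabilityMeasure ρ)
    (hweak : ∀ b : X →ᵇ ℝ, Tendsto (fun k => ∫ x, b x ∂(ν k)) atTop (𝓝 (∫ x, b x ∂ρ)))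
    (htight2 : ∀ ε > (0:ℝ), ∃ K : Set X, IsCompact K ∧ ∀ k, (ν k) Kᶜ ≤ ENNReal.ofReal ε)
    {F : ℕ → X → ℝ} {f : X → ℝ} (hf : Continuous f)
    (hFmeas : ∀ k, Measurable (F k)) {M : ℝ} (hM : 0 ≤ M)
    (hFbd : ∀ k x, |F k x| ≤ M) (hfbd : ∀ x, |f x| ≤ M)
    (hcc : ∀ (x : X) (xs : ℕ → X), Tendsto xs atTop (𝓝 x) →
      Tendsto (fun n => F n (xs n)) atTop (𝓝 (f x))) :
    Tendsto (fun k => ∫ x, F k x ∂(ν k)) atTop (𝓝 (∫ x, f x ∂ρ)) := by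
  have key : Tendsto (fun k => ∫ x, F k x ∂(ν k) - ∫ x, f x ∂(ν k)) atTop (𝓝 0) := by
    rw [NormedAddCommGroup.tendsto_nhds_zero]
    intro ε hε
    set δ : ℝ := ε / (2 * (1 + M)) with hδdef
    have hden : (0:ℝ) < 2 * (1 + M) := by linarith
    have hδ : 0 < δ := div_pos hε hden
    obtain ⟨K, hK, hKb⟩ := htight2 δ hδ
    filter_upwards [aux_unif_on_compact hf hcc hK hδ] with k hk
    have hFint : Integrable (F k) (ν k) :=
      aux_integrable _ (hFmeas k).aestronglyMeasurable (hFbd k)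
    have hfint : Integrable f (ν k) :=
      aux_integrable _ hf.measurable.aestronglyMeasurable hfbd
    have hsub : Integrable (fun x => F k x - f x) (ν k) := hFint.sub hfint
    have hGint : Integrable (fun x => δ + Set.indicator Kᶜ (fun _ => 2 * M) x) (ν k) :=
      (integrable_const δ).add ((integrable_const (2 * M)).indicator
        hK.isClosed.measurableSet.compl)
    have hptwise : ∀ x, |F k x - f x| ≤ δ + Set.indicator Kᶜ (fun _ => 2 * M) x := by
      intro x
      by_cases hx : x ∈ K
      · have h1 := hk x hx
        have h2 : (0:ℝ) ≤ Set.indicator Kᶜ (fun _ => 2 * M) x :=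
          Set.indicator_nonneg (fun _ _ => by linarith) x
        linarith
      · have hxc : x ∈ Kᶜ := hx
        rw [Set.indicator_of_mem hxc]
        have h1 := hFbd k x
        have h2 := hfbd x
        have := abs_sub (F k x) (f x)
        calc |F k x - f x| ≤ |F k x| + |f x| := abs_sub _ _
        _ ≤ 2 * M := by linarith
        _ ≤ δ + 2 * M := by linarith
    have step1 : ‖∫ x, F k x ∂(ν k) - ∫ x, f x ∂(ν k)‖ ≤ ∫ x, |F k x - f x| ∂(ν k) := by
      rw [← integral_sub hFint hfint]
      simpa [Real.norm_eq_abs] using norm_integral_le_integral_norm (fun x => F k x - f x)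
    have step2 : ∫ x, |F k x - f x| ∂(ν k) ≤
        ∫ x, (δ + Set.indicator Kᶜ (fun _ => 2 * M) x) ∂(ν k) :=
      integral_mono hsub.abs hGint hptwise
    have step3 : ∫ x, (δ + Set.indicator Kᶜ (fun _ => 2 * M) x) ∂(ν k) =
        δ + ((ν k) Kᶜ).toReal * (2 * M) := by
      rw [integral_add (integrable_const δ) ((integrable_const (2 * M)).indicator
        hK.isClosed.measurableSet.compl), integral_const,
        integral_indicator_const _ hK.isClosed.measurableSet.compl]
      simp [measure_univ]
      exact Or.inl rfl
    have step4 : ((ν k) Kᶜ).toReal ≤ δ :=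
      ENNReal.toReal_le_of_le_ofReal hδ.le (hKb k)
    have : ‖∫ x, F k x ∂(ν k) - ∫ x, f x ∂(ν k)‖ ≤ δ + δ * (2 * M) := by
      have h5 : ((ν k) Kᶜ).toReal * (2 * M) ≤ δ * (2 * M) := by
        apply mul_le_mul_of_nonneg_right step4; linarith
      linarith [step1, step2.trans (le_of_eq step3)]
    have hfin : δ + δ * (2 * M) < ε := by
      have h6 : δ * (2 * (1 + M)) = ε := div_mul_cancel₀ ε hden.ne'
      nlinarith
    linarith
  have h2 := hweak (mkBCF f hf M hfbd)
  simp only [mkBCF_apply] at h2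
  have := key.add h2
  simpa using this

end Aux2


section Prokhorov
variable {X : Type*} [MetricSpace X] [TopologicalSpace.SeparableSpace X]
  [MeasurableSpace X] [BorelSpace X]

private lemma aux_nnreal_liminf {Pρ : ProbabilityMeasure X} {Pν : ℕ → ProbabilityMeasure X}
    {G : Set X} (h : (Pρ : Measure X) G ≤ atTop.liminf fun k => (Pν k : Measure X) G) :
    Pρ G ≤ atTop.liminf fun k => Pν k G := by
  have aux : (ENNReal.ofNNReal (atTop.liminf fun k => Pν k G)) =
      atTop.liminf (fun k => ((Pν k G : ℝ≥0∞))) := by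
    refine Monotone.map_liminf_of_continuousAt (F := atTop) ENNReal.coe_mono (fun k => Pν k G)
      ENNReal.continuous_coe.continuousAt ?_ ?_
    · exact IsBoundedUnder.isCoboundedUnder_ge ⟨1, by simp⟩
    · exact ⟨0, by simp⟩
  rw [← ENNReal.coe_le_coe, aux]
  simpa [ProbabilityMeasure.ennreal_coeFn_eq_coeFn_toMeasure] using h

/-- Prokhorov-type extraction: a tight sequence of probability measures on a separable metric
space has a subsequence converging weakly to some probability measure. -/
private lemma aux_prokhorov (μ : ℕ → Measure X) (hprob : ∀ n, IsProbabilityMeasure (μ n))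
    (htight : ∀ ε > (0:ℝ), ∃ K : Set X, IsCompact K ∧ ∀ n, μ n Kᶜ ≤ ENNReal.ofReal ε) :
    ∃ (ρ : Measure X) (hρ : IsProbabilityMeasure ρ) (φ : ℕ → ℕ), StrictMono φ ∧
      (∀ G : Set X, IsOpen G → ρ G ≤ atTop.liminf (fun k => μ (φ k) G)) ∧
      Tendsto (fun k => (⟨μ (φ k), hprob (φ k)⟩ : ProbabilityMeasure X)) atTop
        (@nhds (ProbabilityMeasure X) _ ⟨ρ, hρ⟩) := by
  classical
  have hne : Nonempty X := by
    by_contra hc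
    rw [not_nonempty_iff] at hc
    have h1 := (hprob 0).measure_univ
    rw [Set.univ_eq_empty_iff.mpr hc, measure_empty] at h1
    exact zero_ne_one h1
  set d : ℕ → X := TopologicalSpace.denseSeq X with hd_def
  have hd : DenseRange d := TopologicalSpace.denseRange_denseSeq X
  set A : Finset (ℕ × ℚ) → Set X :=
    fun S => ⋃ p ∈ S, Metric.closedBall (d p.1) (p.2 : ℝ) with hA_def
  set Uo : Finset (ℕ × ℚ) → Set X :=
    fun S => ⋃ p ∈ S, Metric.ball (d p.1) (p.2 : ℝ) with hUo_def
  have hUoA : ∀ S, Uo S ⊆ A S := fun S =>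
    Set.iUnion₂_mono fun p _ => Metric.ball_subset_closedBall
  have hAclosed : ∀ S, IsClosed (A S) := fun S =>
    Set.Finite.isClosed_biUnion S.finite_toSet fun p _ => Metric.isClosed_closedBall
  have hUoopen : ∀ S, IsOpen (Uo S) := fun S =>
    isOpen_biUnion fun p _ => Metric.isOpen_ball
  -- extract a subsequence along which the measures of all the sets `A S` converge
  obtain ⟨L, φ, hφ, hFconv⟩ :=
    SeqCompactSpace.tendsto_subseq (fun n (S : Finset (ℕ × ℚ)) => μ n (A S))
  set ν : ℕ → Measure X := fun k => μ (φ k) with hν_def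
  haveI : ∀ k, IsProbabilityMeasure (ν k) := fun k => hprob (φ k)
  have hconvS : ∀ S, Tendsto (fun k => ν k (A S)) atTop (𝓝 (L S)) := fun S =>
    tendsto_pi_nhds.mp hFconv S
  -- ultrafilter limits
  set U : Ultrafilter ℕ := Ultrafilter.of atTop with hU_def
  have hU : (U : Filter ℕ) ≤ atTop := Ultrafilter.of_le _
  set α : Set X → ℝ≥0∞ := fun B => (U.map (fun k => ν k B)).lim with hα_def
  have hαt : ∀ B : Set X, Tendsto (fun k => ν k B) (U : Filter ℕ) (𝓝 (α B)) := by
    intro B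
    have := Ultrafilter.le_nhds_lim (U.map (fun k => ν k B))
    rwa [Ultrafilter.coe_map] at this
  have hαmono : ∀ B C : Set X, B ⊆ C → α B ≤ α C := fun B C h =>
    le_of_tendsto_of_tendsto' (hαt B) (hαt C) fun k => measure_mono h
  have hαadd : ∀ B C : Set X, MeasurableSet C → Disjoint B C → α (B ∪ C) = α B + α C := by
    intro B C hC hdisj
    refine tendsto_nhds_unique (hαt (B ∪ C)) (Tendsto.congr (fun k => ?_) ((hαt B).add (hαt C)))
    exact (measure_union hdisj hC).symm
  have hαuniv : α Set.univ = 1 := by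
    refine tendsto_nhds_unique (hαt Set.univ) ?_
    simpa [measure_univ] using (tendsto_const_nhds : Tendsto (fun _ : ℕ => (1:ℝ≥0∞)) U (𝓝 1))
  have hαone : ∀ B : Set X, α B ≤ 1 := fun B => by
    rw [← hαuniv]; exact hαmono B Set.univ (Set.subset_univ B)
  have hαA : ∀ S, α (A S) = L S := fun S =>
    tendsto_nhds_unique (hαt (A S)) ((hconvS S).mono_left hU)
  -- the inner content
  set lam0 : Set X → ℝ≥0∞ := fun K => ⨅ (G : Set X) (_ : IsOpen G) (_ : K ⊆ G), α G
    with hlam0_def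
  have hlam0_le : ∀ {K G : Set X}, IsOpen G → K ⊆ G → lam0 K ≤ α G := by
    intro K G hG hKG
    exact iInf_le_of_le G (iInf_le_of_le hG (iInf_le_of_le hKG le_rfl))
  have hlam0_ge : ∀ K : Set X, α K ≤ lam0 K := fun K =>
    le_iInf fun G => le_iInf fun hG => le_iInf fun hKG => hαmono _ _ hKG
  have hlam0_one : ∀ K : Set X, lam0 K ≤ 1 := fun K =>
    (hlam0_le isOpen_univ (Set.subset_univ _)).trans (hαone _)
  have hlam0_ne_top : ∀ K : Set X, lam0 K ≠ ∞ := fun K =>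
    ((hlam0_one K).trans_lt ENNReal.one_lt_top).ne
  have hlam0_mono : ∀ {K1 K2 : Set X}, K1 ⊆ K2 → lam0 K1 ≤ lam0 K2 := by
    intro K1 K2 h
    exact le_iInf fun G => le_iInf fun hG => le_iInf fun h2 => hlam0_le hG (h.trans h2)
  have hlam0_exists : ∀ (K : Set X) (ε : ℝ≥0∞), 0 < ε →
      ∃ G, IsOpen G ∧ K ⊆ G ∧ α G ≤ lam0 K + ε := by
    intro K ε hε
    have hlt : lam0 K < lam0 K + ε := ENNReal.lt_add_right (hlam0_ne_top K) hε.ne'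
    conv at hlt => lhs; rw [hlam0_def]
    simp only [iInf_lt_iff] at hlt
    obtain ⟨G, hG, hKG, hlt⟩ := hlt
    exact ⟨G, hG, hKG, hlt.le⟩
  have hsup_le : ∀ K1 K2 : Set X, lam0 (K1 ∪ K2) ≤ lam0 K1 + lam0 K2 := by
    intro K1 K2
    refine ENNReal.le_of_forall_pos_le_add fun ε hε _ => ?_
    have hε2 : (0:ℝ≥0∞) < (ε:ℝ≥0∞)/2 := ENNReal.half_pos (ENNReal.coe_ne_zero.mpr hε.ne')
    obtain ⟨G1, hG1, hKG1, hα1⟩ := hlam0_exists K1 ((ε:ℝ≥0∞)/2) hε2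
    obtain ⟨G2, hG2, hKG2, hα2⟩ := hlam0_exists K2 ((ε:ℝ≥0∞)/2) hε2
    have h1 : lam0 (K1 ∪ K2) ≤ α (G1 ∪ G2) :=
      hlam0_le (hG1.union hG2) (Set.union_subset_union hKG1 hKG2)
    have h2 : α (G1 ∪ G2) ≤ α G1 + α G2 :=
      le_of_tendsto_of_tendsto' (hαt _) ((hαt G1).add (hαt G2)) fun k => measure_union_le _ _
    calc lam0 (K1 ∪ K2) ≤ α G1 + α G2 := h1.trans h2
      _ ≤ (lam0 K1 + (ε:ℝ≥0∞)/2) + (lam0 K2 + (ε:ℝ≥0∞)/2) := add_le_add hα1 hα2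
      _ = lam0 K1 + lam0 K2 + ((ε:ℝ≥0∞)/2 + (ε:ℝ≥0∞)/2) := by ring
      _ = lam0 K1 + lam0 K2 + ε := by rw [ENNReal.add_halves]
  have hsup_disjoint : ∀ K1 K2 : Set X, IsCompact K1 → IsCompact K2 → Disjoint K1 K2 →
      lam0 (K1 ∪ K2) = lam0 K1 + lam0 K2 := by
    intro K1 K2 hK1 hK2 hdisj
    refine le_antisymm (hsup_le K1 K2) ?_
    obtain ⟨V1, V2, hV1, hV2, hKV1, hKV2, hV12⟩ :=
      SeparatedNhds.of_isCompact_isCompact hK1 hK2 hdisj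
    refine le_iInf fun G => le_iInf fun hG => le_iInf fun hsub => ?_
    have e1 : K1 ⊆ G ∩ V1 :=
      Set.subset_inter ((Set.subset_union_left).trans hsub) hKV1
    have e2 : K2 ⊆ G ∩ V2 :=
      Set.subset_inter ((Set.subset_union_right).trans hsub) hKV2
    have hdisj' : Disjoint (G ∩ V1) (G ∩ V2) :=
      hV12.mono Set.inter_subset_right Set.inter_subset_right
    calc lam0 K1 + lam0 K2 ≤ α (G ∩ V1) + α (G ∩ V2) :=
          add_le_add (hlam0_le (hG.inter hV1) e1) (hlam0_le (hG.inter hV2) e2)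
      _ = α ((G ∩ V1) ∪ (G ∩ V2)) :=
          (hαadd _ _ (hG.inter hV2).measurableSet hdisj').symm
      _ ≤ α G := hαmono _ _ (Set.union_subset Set.inter_subset_left Set.inter_subset_left)
  -- build the content and its measure
  set C : Content X :=
    { toFun := fun K => (lam0 K).toNNReal
      mono' := fun K1 K2 h =>
        ENNReal.toNNReal_mono (hlam0_ne_top _) (hlam0_mono h)
      sup_disjoint' := by
        intro K1 K2 hdisj _ _
        have h : lam0 ((K1 ⊔ K2 : TopologicalSpace.Compacts X) : Set X) =
            lam0 (K1 : Set X) + lam0 (K2 : Set X) := by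
          rw [TopologicalSpace.Compacts.coe_sup]
          exact hsup_disjoint _ _ K1.2 K2.2 hdisj
        show (lam0 _).toNNReal = (lam0 _).toNNReal + (lam0 _).toNNReal
        rw [h, ENNReal.toNNReal_add (hlam0_ne_top _) (hlam0_ne_top _)]
      sup_le' := by
        intro K1 K2
        have h : lam0 ((K1 ⊔ K2 : TopologicalSpace.Compacts X) : Set X) ≤
            lam0 (K1 : Set X) + lam0 (K2 : Set X) := by
          rw [TopologicalSpace.Compacts.coe_sup]
          exact hsup_le _ _
        have h2 := ENNReal.toNNReal_mono
          (ENNReal.add_ne_top.mpr ⟨hlam0_ne_top _, hlam0_ne_top _⟩) h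
        rwa [ENNReal.toNNReal_add (hlam0_ne_top _) (hlam0_ne_top _)] at h2 } with hC_def
  have hCK : ∀ K : TopologicalSpace.Compacts X, (C K : ℝ≥0∞) = lam0 K := fun K => by
    change ((lam0 (K : Set X)).toNNReal : ℝ≥0∞) = lam0 (K : Set X)
    exact ENNReal.coe_toNNReal (hlam0_ne_top _)
  set ρm : Measure X := C.measure with hρm_def
  have hopen : ∀ (G : Set X) (hG : IsOpen G),
      ρm G = ⨆ (K : TopologicalSpace.Compacts X) (_ : (K : Set X) ⊆ G), lam0 K := by
    intro G hG
    rw [hρm_def, C.measure_apply hG.measurableSet, C.outerMeasure_of_isOpen G hG]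
    unfold Content.innerContent
    congr 1
    ext K
    congr 1
    ext hKG
    exact hCK K
  -- liminf bound for open sets
  have hliminf : ∀ G : Set X, IsOpen G → ρm G ≤ atTop.liminf fun k => ν k G := by
    intro G hG
    rw [hopen G hG]
    refine iSup₂_le fun K hKG => ?_
    -- find a finite union of closed balls between K and G
    have hcov : ∀ x ∈ (K : Set X), ∃ p : ℕ × ℚ,
        x ∈ Metric.ball (d p.1) (p.2 : ℝ) ∧ Metric.closedBall (d p.1) (p.2 : ℝ) ⊆ G := by
      intro x hx
      obtain ⟨r, hr, hball⟩ := Metric.isOpen_iff.mp hG x (hKG hx)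
      obtain ⟨q, hq0, hqr⟩ := exists_rat_btwn (show (0:ℝ) < r/2 by linarith)
      obtain ⟨i, hi⟩ := hd.exists_dist_lt x hq0
      refine ⟨(i, q), by simpa [Metric.mem_ball] using hi, fun y hy => ?_⟩
      apply hball
      rw [Metric.mem_ball]
      have h1 : dist y (d i) ≤ (q:ℝ) := Metric.mem_closedBall.mp hy
      have h2 : dist (d i) x < (q:ℝ) := by rwa [dist_comm]
      calc dist y x ≤ dist y (d i) + dist (d i) x := dist_triangle _ _ _
        _ < (q:ℝ) + (q:ℝ) := by linarith
        _ < r := by linarith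
    set ι := {p : ℕ × ℚ // Metric.closedBall (d p.1) (p.2 : ℝ) ⊆ G} with hι_def
    have hcover : (K : Set X) ⊆ ⋃ i : ι, Metric.ball (d i.1.1) (i.1.2 : ℝ) := by
      intro x hx
      obtain ⟨p, hp1, hp2⟩ := hcov x hx
      exact Set.mem_iUnion.mpr ⟨⟨p, hp2⟩, hp1⟩
    obtain ⟨t, ht⟩ := K.2.elim_finite_subcover (fun i : ι => Metric.ball (d i.1.1) (i.1.2 : ℝ))
      (fun i => Metric.isOpen_ball) hcover
    set S : Finset (ℕ × ℚ) := t.image Subtype.val with hS_def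
    have hKUo : (K : Set X) ⊆ Uo S := by
      refine ht.trans ?_
      intro x hx
      rw [Set.mem_iUnion₂] at hx ⊢
      obtain ⟨i, hit, hxi⟩ := hx
      exact ⟨i.1, Finset.mem_image_of_mem _ hit, hxi⟩
    have hAG : A S ⊆ G := by
      refine Set.iUnion₂_subset fun p hp => ?_
      obtain ⟨i, _, rfl⟩ := Finset.mem_image.mp hp
      exact i.2
    calc lam0 K ≤ α (Uo S) := hlam0_le (hUoopen S) hKUo
      _ ≤ α (A S) := hαmono _ _ (hUoA S)
      _ = L S := hαA S
      _ = atTop.liminf fun k => ν k (A S) := ((hconvS S).liminf_eq).symm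
      _ ≤ atTop.liminf fun k => ν k G :=
          liminf_le_liminf (Eventually.of_forall fun k => measure_mono hAG)
  -- total mass one
  have huniv_le : ρm Set.univ ≤ 1 := by
    rw [hopen Set.univ isOpen_univ]
    exact iSup₂_le fun K _ => hlam0_one K
  have huniv_ge : ∀ ε : ℝ, 0 < ε → 1 - ENNReal.ofReal ε ≤ ρm Set.univ := by
    intro ε hε
    obtain ⟨K, hK, hKb⟩ := htight ε hε
    have hνK : ∀ k, 1 - ENNReal.ofReal ε ≤ ν k K := by
      intro k
      have hcompl := measure_compl hK.isClosed.measurableSet (measure_ne_top (ν k) K)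
      rw [measure_univ] at hcompl
      have h1 : (1:ℝ≥0∞) - ν k K ≤ ENNReal.ofReal ε := by rw [← hcompl]; exact hKb (φ k)
      have h2 : (1:ℝ≥0∞) ≤ ENNReal.ofReal ε + ν k K := by
        calc (1:ℝ≥0∞) = (1 - ν k K) + ν k K :=
              (tsub_add_cancel_of_le (prob_le_one)).symm
          _ ≤ ENNReal.ofReal ε + ν k K := add_le_add h1 le_rfl
      exact tsub_le_iff_right.mpr (by rwa [add_comm] at h2)
    have hαK : 1 - ENNReal.ofReal ε ≤ α K := ge_of_tendsto' (hαt K) hνK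
    rw [hopen Set.univ isOpen_univ]
    refine le_trans (hαK.trans (hlam0_ge K)) ?_
    exact le_iSup_of_le ⟨K, hK⟩ (le_iSup_of_le (Set.subset_univ _) le_rfl)
  have huniv : ρm Set.univ = 1 := by
    refine le_antisymm huniv_le ?_
    refine ENNReal.le_of_forall_pos_le_add fun ε hε _ => ?_
    have := huniv_ge ε (by exact_mod_cast hε)
    have h1 : (1:ℝ≥0∞) ≤ ρm Set.univ + ENNReal.ofReal ε := tsub_le_iff_right.mp this
    rwa [ENNReal.ofReal_coe_nnreal] at h1
  have hprobρ : IsProbabilityMeasure ρm := ⟨huniv⟩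
  -- weak convergence via portmanteau
  have htendsto : Tendsto (fun k => (⟨ν k, hprob (φ k)⟩ : ProbabilityMeasure X)) atTop
      (@nhds (ProbabilityMeasure X) _ ⟨ρm, hprobρ⟩) := by
    apply MeasureTheory.tendsto_of_forall_isOpen_le_liminf
    intro G hG
    exact aux_nnreal_liminf (hliminf G hG)
  exact ⟨ρm, hprobρ, φ, hφ, hliminf, htendsto⟩

end Prokhorov



/-- on a Polish space, if π is the unique invariant probability
measure of P, the πₙ are invariant for Pₙ and tight, Pₙ(·|xₙ) → P(·|x) weakly
along every convergent sequence xₙ → x, and P is weakly continuous, then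
πₙ → π weakly. -/
theorem stmt_19
    {X : Type*} [MetricSpace X] [CompleteSpace X] [TopologicalSpace.SeparableSpace X]
    [MeasurableSpace X] [BorelSpace X]
    (P : X → Measure X) (hPmeas : Measurable P)
    (hPprob : ∀ x, IsProbabilityMeasure (P x))
    (Pn : ℕ → X → Measure X) (hPnmeas : ∀ n, Measurable (Pn n))
    (hPnprob : ∀ n x, IsProbabilityMeasure (Pn n x))
    (π : Measure X) [IsProbabilityMeasure π] (hπinv : π.bind P = π)
    (hπuniq : ∀ ρ : Measure X, IsProbabilityMeasure ρ → ρ.bind P = ρ → ρ = π)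
    (πn : ℕ → Measure X) (hπnprob : ∀ n, IsProbabilityMeasure (πn n))
    (hπninv : ∀ n, (πn n).bind (Pn n) = πn n)
    (htight : ∀ ε > (0 : ℝ), ∃ K : Set X, IsCompact K ∧
      ∀ n, (πn n Kᶜ).toReal ≤ ε)
    (hcontweak : ∀ (x : X) (xs : ℕ → X), Tendsto xs atTop (𝓝 x) →
      ∀ g : X → ℝ, Continuous g → (∃ M, ∀ y, |g y| ≤ M) →
        Tendsto (fun n => ∫ y, g y ∂(Pn n (xs n))) atTop
          (𝓝 (∫ y, g y ∂(P x))))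
    (hPweakcont : ∀ (x : X) (xs : ℕ → X), Tendsto xs atTop (𝓝 x) →
      ∀ g : X → ℝ, Continuous g → (∃ M, ∀ y, |g y| ≤ M) →
        Tendsto (fun n => ∫ y, g y ∂(P (xs n))) atTop (𝓝 (∫ y, g y ∂(P x)))) :
    ∀ g : X → ℝ, Continuous g → (∃ M, ∀ y, |g y| ≤ M) →
      Tendsto (fun n => ∫ y, g y ∂(πn n)) atTop (𝓝 (∫ y, g y ∂π)) := by
  intro g hg hMex
  obtain ⟨M0, hM0⟩ := hMex
  have htight' : ∀ ε > (0:ℝ), ∃ K : Set X, IsCompact K ∧ ∀ n, πn n Kᶜ ≤ ENNReal.ofReal ε := by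
    intro ε hε
    obtain ⟨K, hK, hKb⟩ := htight ε hε
    exact ⟨K, hK, fun n =>
      (ENNReal.le_ofReal_iff_toReal_le (measure_ne_top _ _) hε.le).mpr (hKb n)⟩
  apply tendsto_of_subseq_tendsto
  intro ns hns
  obtain ⟨φ₀, hφ₀, hnsφ₀⟩ := aux_exists_strictMono_comp ns hns
  obtain ⟨ρ, hρprob, φ₁, hφ₁, _hliminf, htendsto⟩ :=
    aux_prokhorov (fun k => πn ((ns ∘ φ₀) k)) (fun k => hπnprob _)
      (fun ε hε => by
        obtain ⟨K, hK, hKb⟩ := htight' ε hε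
        exact ⟨K, hK, fun k => hKb _⟩)
  set m : ℕ → ℕ := (ns ∘ φ₀) ∘ φ₁ with hm_def
  have hm : StrictMono m := hnsφ₀.comp hφ₁
  haveI := hρprob
  haveI hpm : ∀ k, IsProbabilityMeasure (πn (m k)) := fun k => hπnprob _
  have hweak : ∀ b : X →ᵇ ℝ,
      Tendsto (fun k => ∫ x, b x ∂(πn (m k))) atTop (𝓝 (∫ x, b x ∂ρ)) := fun b =>
    ProbabilityMeasure.tendsto_iff_forall_integral_tendsto.mp htendsto b
  have htightm : ∀ ε > (0:ℝ), ∃ K : Set X, IsCompact K ∧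
      ∀ k, (πn (m k)) Kᶜ ≤ ENNReal.ofReal ε := by
    intro ε hε
    obtain ⟨K, hK, hKb⟩ := htight' ε hε
    exact ⟨K, hK, fun k => hKb _⟩
  haveI hbindprob : IsProbabilityMeasure (ρ.bind P) := by
    constructor
    rw [Measure.bind_apply MeasurableSet.univ hPmeas.aemeasurable]
    have hx : ∀ x, P x Set.univ = 1 := fun x => (hPprob x).measure_univ
    simp [hx]
  have hinv : ρ.bind P = ρ := by
    apply ext_of_forall_lintegral_eq_of_IsFiniteMeasure
    intro f
    set gR : X → ℝ := fun x => (f x : ℝ) with hgR_def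
    have hgRcont : Continuous gR := NNReal.continuous_coe.comp f.continuous
    have hgR0 : ∀ x, 0 ≤ gR x := fun x => (f x).coe_nonneg
    have hMex2 : ∃ M : ℝ, 0 ≤ M ∧ ∀ x, |gR x| ≤ M := by
      rcases isEmpty_or_nonempty X with hX | hX
      · exact ⟨0, le_rfl, fun x => (hX.elim x)⟩
      · obtain ⟨C, hC⟩ := f.bounded
        have x₀ : X := Classical.arbitrary X
        have hC0 : (0:ℝ) ≤ C := le_trans dist_nonneg (hC x₀ x₀)
        refine ⟨C + gR x₀, by positivity, fun x => ?_⟩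
        rw [abs_of_nonneg (hgR0 x)]
        have h1 : dist (f x) (f x₀) ≤ C := hC x x₀
        rw [NNReal.dist_eq] at h1
        have h2 : (f x : ℝ) - (f x₀ : ℝ) ≤ C := (le_abs_self _).trans h1
        simp only [hgR_def]
        linarith
    obtain ⟨M, hMnn, hgRbd⟩ := hMex2
    have hmeas_of : Measurable fun y => ENNReal.ofReal (gR y) :=
      ENNReal.measurable_ofReal.comp hgRcont.measurable
    have hofeq : ∀ y, ENNReal.ofReal (gR y) = (f y : ℝ≥0∞) := fun y =>
      ENNReal.ofReal_coe_nnreal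
    set Lk : ℕ → X → ℝ≥0∞ := fun k x => ∫⁻ y, ENNReal.ofReal (gR y) ∂(Pn (m k) x) with hLk_def
    set LP : X → ℝ≥0∞ := fun x => ∫⁻ y, ENNReal.ofReal (gR y) ∂(P x) with hLP_def
    set F : ℕ → X → ℝ := fun k x => ∫ y, gR y ∂(Pn (m k) x) with hF_def
    set fP : X → ℝ := fun x => ∫ y, gR y ∂(P x) with hfP_def
    have hLk_meas : ∀ k, Measurable (Lk k) := fun k =>
      (Measure.measurable_lintegral hmeas_of).comp (hPnmeas (m k))
    have hLP_meas : Measurable LP :=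
      (Measure.measurable_lintegral hmeas_of).comp hPmeas
    have hbound : ∀ (μ : Measure X), IsProbabilityMeasure μ →
        (∫⁻ y, ENNReal.ofReal (gR y) ∂μ) ≤ ENNReal.ofReal M := by
      intro μ hμ
      calc ∫⁻ y, ENNReal.ofReal (gR y) ∂μ ≤ ∫⁻ _, ENNReal.ofReal M ∂μ :=
            lintegral_mono fun y => ENNReal.ofReal_le_ofReal ((le_abs_self _).trans (hgRbd y))
        _ = ENNReal.ofReal M := by rw [lintegral_const, hμ.measure_univ, mul_one]
    have hLk_le : ∀ k x, Lk k x ≤ ENNReal.ofReal M := fun k x =>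
      hbound _ (hPnprob (m k) x)
    have hLP_le : ∀ x, LP x ≤ ENNReal.ofReal M := fun x => hbound _ (hPprob x)
    have hint_eq : ∀ (μ : Measure X),
        ∫ y, gR y ∂μ = (∫⁻ y, ENNReal.ofReal (gR y) ∂μ).toReal := fun μ =>
      integral_eq_lintegral_of_nonneg_ae (ae_of_all _ hgR0)
        hgRcont.measurable.aestronglyMeasurable
    have hFeq : ∀ k x, F k x = (Lk k x).toReal := fun k x => hint_eq _
    have hfPeq : ∀ x, fP x = (LP x).toReal := fun x => hint_eq _
    have hF_meas : ∀ k, Measurable (F k) := fun k => by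
      have heq : F k = fun x => (Lk k x).toReal := funext (hFeq k)
      rw [heq]
      exact (hLk_meas k).ennreal_toReal
    have hF_nonneg : ∀ k x, 0 ≤ F k x := fun k x => by
      rw [hFeq k x]; exact ENNReal.toReal_nonneg
    have hF_bd : ∀ k x, |F k x| ≤ M := fun k x => by
      rw [abs_of_nonneg (hF_nonneg k x), hFeq k x]
      exact ENNReal.toReal_le_of_le_ofReal hMnn (hLk_le k x)
    have hfP_nonneg : ∀ x, 0 ≤ fP x := fun x => by
      rw [hfPeq x]; exact ENNReal.toReal_nonneg
    have hfP_bd : ∀ x, |fP x| ≤ M := fun x => by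
      rw [abs_of_nonneg (hfP_nonneg x), hfPeq x]
      exact ENNReal.toReal_le_of_le_ofReal hMnn (hLP_le x)
    have hfPcont : Continuous fP := by
      have hseq : SeqContinuous fP := by
        intro xs x hxs
        exact hPweakcont x xs hxs gR hgRcont ⟨M, hgRbd⟩
      exact hseq.continuous
    have hccfull : ∀ (x : X) (xs : ℕ → X), Tendsto xs atTop (𝓝 x) →
        Tendsto (fun n => ∫ y, gR y ∂(Pn n (xs n))) atTop (𝓝 (fP x)) := fun x xs hxs =>
      hcontweak x xs hxs gR hgRcont ⟨M, hgRbd⟩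
    have hcc : ∀ (x : X) (xs : ℕ → X), Tendsto xs atTop (𝓝 x) →
        Tendsto (fun k => F k (xs k)) atTop (𝓝 (fP x)) := by
      intro x xs hxs
      have h := aux_cc_subseq (T := fun n x => ∫ y, gR y ∂(Pn n x)) (c := fP) hccfull hm hxs
      simpa using h
    have hA : Tendsto (fun k => ∫ x, F k x ∂(πn (m k))) atTop (𝓝 (∫ x, fP x ∂ρ)) :=
      aux_tendsto_integral_cc (fun k => πn (m k)) (fun k => hπnprob _) ρ hρprob hweak htightm
        hfPcont hF_meas hMnn hF_bd hfP_bd hcc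
    have hB : ∀ k, ∫ x, F k x ∂(πn (m k)) = ∫ x, gR x ∂(πn (m k)) := by
      intro k
      have h1 : ∫ x, F k x ∂(πn (m k)) = (∫⁻ x, ENNReal.ofReal (F k x) ∂(πn (m k))).toReal :=
        integral_eq_lintegral_of_nonneg_ae (ae_of_all _ (hF_nonneg k))
          (hF_meas k).aestronglyMeasurable
      have h2 : ∀ x, ENNReal.ofReal (F k x) = Lk k x := fun x => by
        rw [hFeq k x, ENNReal.ofReal_toReal ((hLk_le k x).trans_lt ENNReal.ofReal_lt_top).ne]
      have h3 : ∫⁻ x, Lk k x ∂(πn (m k)) = ∫⁻ y, ENNReal.ofReal (gR y) ∂(πn (m k)) := by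
        conv_rhs => rw [← hπninv (m k)]
        rw [Measure.lintegral_bind (hPnmeas (m k)).aemeasurable hmeas_of.aemeasurable]
      rw [h1]
      simp_rw [h2]
      rw [h3, ← hint_eq]
    have hC : Tendsto (fun k => ∫ x, gR x ∂(πn (m k))) atTop (𝓝 (∫ x, gR x ∂ρ)) := by
      have := hweak (mkBCF gR hgRcont M hgRbd)
      simpa using this
    have hD : ∫ x, fP x ∂ρ = ∫ x, gR x ∂ρ := by
      refine tendsto_nhds_unique ?_ hC
      exact hA.congr hB
    have hE1 : ∫ x, fP x ∂ρ = (∫⁻ x, LP x ∂ρ).toReal := by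
      have h1 : ∫ x, fP x ∂ρ = (∫⁻ x, ENNReal.ofReal (fP x) ∂ρ).toReal :=
        integral_eq_lintegral_of_nonneg_ae (ae_of_all _ hfP_nonneg)
          hfPcont.measurable.aestronglyMeasurable
      have h2 : ∀ x, ENNReal.ofReal (fP x) = LP x := fun x => by
        rw [hfPeq x, ENNReal.ofReal_toReal ((hLP_le x).trans_lt ENNReal.ofReal_lt_top).ne]
      rw [h1]; simp_rw [h2]
    have hE2 : ∫ x, gR x ∂ρ = (∫⁻ x, ENNReal.ofReal (gR x) ∂ρ).toReal := hint_eq ρ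
    have hfin1 : ∫⁻ x, LP x ∂ρ ≠ ∞ := by
      refine ((lintegral_mono fun x => hLP_le x).trans_lt ?_).ne
      rw [lintegral_const, measure_univ, mul_one]
      exact ENNReal.ofReal_lt_top
    have hfin2 : ∫⁻ x, ENNReal.ofReal (gR x) ∂ρ ≠ ∞ :=
      ((hbound ρ hρprob).trans_lt ENNReal.ofReal_lt_top).ne
    have hEE : ∫⁻ x, LP x ∂ρ = ∫⁻ x, ENNReal.ofReal (gR x) ∂ρ := by
      have hD' := hD
      rw [hE1, hE2] at hD'
      exact (ENNReal.toReal_eq_toReal_iff' hfin1 hfin2).mp hD'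
    calc ∫⁻ x, (f x : ℝ≥0∞) ∂(ρ.bind P)
        = ∫⁻ x, (∫⁻ y, (f y : ℝ≥0∞) ∂(P x)) ∂ρ :=
          Measure.lintegral_bind hPmeas.aemeasurable f.continuous.measurable.coe_nnreal_ennreal.aemeasurable
      _ = ∫⁻ x, LP x ∂ρ :=
          lintegral_congr fun x => lintegral_congr fun y => (hofeq y).symm
      _ = ∫⁻ x, ENNReal.ofReal (gR x) ∂ρ := hEE
      _ = ∫⁻ x, (f x : ℝ≥0∞) ∂ρ := lintegral_congr fun x => hofeq x
  have hρπ : ρ = π := hπuniq ρ hρprob hinv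
  refine ⟨φ₀ ∘ φ₁, ?_⟩
  have hfin := hweak (mkBCF g hg M0 hM0)
  rw [hρπ] at hfin
  simp only [mkBCF_apply] at hfin
  exact hfin
end
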